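/- arXiv:1508.06269 — 2 statements merged into one kernel-verified Lean document; each statement's English description precedes it below -/
import Mathlib

section
/- In a finite-horizon dynamic game where N players' types evolve as conditionally independent controlled Markov chains (the joint transition kernel factorizes as a product over players of kernels Q_t^i(x_t^i | x_{t-1}^i, a_{t-1})) and each player i's action A_t^i is chosen according to a strategy g_t^i depending only on the public action history a_{1:t-1} and its own private type history x_{1:t}^i, the posterior distribution of the joint type history given the public action history factorizes: P^g(x_{1:t} | a_{1:t-1}) = ∏_{i=1}^N P^{g^i}(x_{1:t}^i | a_{1:t-1}), where each factor depends only on player i's own strategy g^i. -/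
open scoped Classical BigOperators

noncomputable section

namespace DynGame

private lemma sum_prod_pi {n Tn : ℕ} {δ : Fin n → Type*} [∀ j, Fintype (δ j)]
    (H : ∀ j, (Fin Tn → δ j) → ℝ) :
    ∑ y : Fin Tn → ∀ j, δ j, ∏ j, H j (fun s => y s j) = ∏ j, ∑ yj, H j yj := by
  rw [Fintype.prod_sum]
  have hb : Function.Bijective
      (fun (y : Fin Tn → ∀ j, δ j) => (fun j s => y s j : ∀ j, Fin Tn → δ j)) :=
    Function.bijective_iff_has_inverse.mpr ⟨fun f s j => f j s, fun y => rfl, fun f => rfl⟩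
  exact Fintype.sum_bijective _ hb _ _ (fun y => rfl)

private lemma factor_lemma {n Tn : ℕ} {δ : Fin n → Type*} [∀ j, Fintype (δ j)]
    (C : ∀ j, (Fin Tn → δ j) → Prop) (G : ∀ j, (Fin Tn → δ j) → ℝ) :
    (∑ y : Fin Tn → ∀ j, δ j,
        if ∀ j, C j (fun s => y s j) then ∏ j, G j (fun s => y s j) else 0)
      = ∏ j, ∑ yj, if C j yj then G j yj else 0 := by
  rw [← sum_prod_pi (fun j yj => if C j yj then G j yj else 0)]
  refine Finset.sum_congr rfl fun y _ => ?_
  by_cases h : ∀ j, C j (fun s => y s j)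
  · rw [if_pos h]
    exact Finset.prod_congr rfl fun j _ => (if_pos (h j)).symm
  · rw [if_neg h]
    push_neg at h
    obtain ⟨j, hj⟩ := h
    refine (Finset.prod_eq_zero (Finset.mem_univ j) ?_).symm
    exact if_neg hj

private lemma sum_split_coord {α : Type*} [Fintype α] {β : Type*} [Fintype β]
    (proj : α → β) (F : α → ℝ) :
    ∑ v : α, F v = ∑ b : β, ∑ v : α, if proj v = b then F v else 0 := by
  rw [Finset.sum_comm]
  refine Finset.sum_congr rfl fun v _ => ?_
  rw [Finset.sum_ite_eq (Finset.univ) (proj v) (fun _ => F v), if_pos (Finset.mem_univ _)]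


variable (N T : ℕ) (X A : Fin N → Type)
  [∀ i, Fintype (X i)] [∀ i, Fintype (A i)]

/-- A (behavioral) strategy profile: player `i` at time `t` sees the public action
history and its own private type history and randomizes over its actions. -/
abbrev Strat := ∀ i : Fin N, Fin T → (Fin T → ∀ j, A j) → (Fin T → X i) → A i → ℝ

/-- Probability of a full trajectory `(x_{1:T}, a_{1:T})` under the prior `Q1`,
the conditionally independent controlled Markov kernels `Qk` and the profile `g`. -/
def trajP (Q1 : ∀ i, X i → ℝ)
    (Qk : ∀ i, Fin T → X i → (∀ j, A j) → X i → ℝ)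
    (g : Strat N T X A)
    (x : Fin T → ∀ i, X i) (a : Fin T → ∀ i, A i) : ℝ :=
  (if h : 0 < T then ∏ i, Q1 i (x ⟨0, h⟩ i) else 1) *
  ∏ t : Fin T,
    ((∏ i, g i t a (fun s => x s i) (a t i)) *
     ∏ i, (if h : (t : ℕ) + 1 < T then
              Qk i ⟨(t : ℕ) + 1, h⟩ (x t i) (a t) (x ⟨(t : ℕ) + 1, h⟩ i) else 1))

/-- Causality: the strategy depends only on the strict past of public actions and the
past (including present) of the player's own types. -/
def Causal (g : Strat N T X A) : Prop :=
  ∀ i (t : Fin T) a a' xi xi',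
    (∀ s : Fin T, (s : ℕ) < (t : ℕ) → a s = a' s) →
    (∀ s : Fin T, (s : ℕ) ≤ (t : ℕ) → xi s = xi' s) →
    g i t a xi = g i t a' xi'

/-- The strategy profile is made of probability distributions. -/
def Stochastic (g : Strat N T X A) : Prop :=
  ∀ i t a xi, (∀ b, 0 ≤ g i t a xi b) ∧ (∑ b, g i t a xi b) = 1

def StochKer (Q1 : ∀ i, X i → ℝ) (Qk : ∀ i, Fin T → X i → (∀ j, A j) → X i → ℝ) : Prop :=
  (∀ i, (∀ x, 0 ≤ Q1 i x) ∧ (∑ x, Q1 i x) = 1) ∧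
  (∀ i t x a, (∀ x', 0 ≤ Qk i t x a x') ∧ (∑ x', Qk i t x a x') = 1)

variable (Q1 : ∀ i, X i → ℝ) (Qk : ∀ i, Fin T → X i → (∀ j, A j) → X i → ℝ)

/-- Marginal probability of the public action history `a_{1:t-1}`
(indices `s` with `s+1 ≤ t-1 <-> s+1 < t` in 0-based time). -/
def aMarg (g : Strat N T X A) (t : ℕ) (a : Fin T → ∀ i, A i) : ℝ :=
  ∑ x' : Fin T → ∀ i, X i, ∑ a' : Fin T → ∀ i, A i,
    if (∀ s : Fin T, (s : ℕ) + 1 < t → a' s = a s) then trajP N T X A Q1 Qk g x' a' else 0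

/-- Joint probability of `(x_{1:t}, a_{1:t-1})`. -/
def xaMarg (g : Strat N T X A) (t : ℕ) (x : Fin T → ∀ i, X i) (a : Fin T → ∀ i, A i) : ℝ :=
  ∑ x' : Fin T → ∀ i, X i, ∑ a' : Fin T → ∀ i, A i,
    if (∀ s : Fin T, (s : ℕ) + 1 < t → a' s = a s) ∧ (∀ s : Fin T, (s : ℕ) < t → x' s = x s)
    then trajP N T X A Q1 Qk g x' a' else 0

/-- Joint conditional `P^g(x_{1:t} | a_{1:t-1})`. -/
def condJoint (g : Strat N T X A) (t : ℕ) (x : Fin T → ∀ i, X i) (a : Fin T → ∀ i, A i) : ℝ :=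
  xaMarg N T X A Q1 Qk g t x a / aMarg N T X A Q1 Qk g t a

/-- Probability of `(x_{1:t}^i, a_{1:t-1})` for a single player `i`. -/
def xiMarg (g : Strat N T X A) (i : Fin N) (t : ℕ) (xi : Fin T → X i)
    (a : Fin T → ∀ i, A i) : ℝ :=
  ∑ x' : Fin T → ∀ i, X i, ∑ a' : Fin T → ∀ i, A i,
    if (∀ s : Fin T, (s : ℕ) + 1 < t → a' s = a s) ∧ (∀ s : Fin T, (s : ℕ) < t → x' s i = xi s)
    then trajP N T X A Q1 Qk g x' a' else 0

/-- Player-`i` marginal conditional `P^g(x_{1:t}^i | a_{1:t-1})`. -/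
def condI (g : Strat N T X A) (i : Fin N) (t : ℕ) (xi : Fin T → X i)
    (a : Fin T → ∀ i, A i) : ℝ :=
  xiMarg N T X A Q1 Qk g i t xi a / aMarg N T X A Q1 Qk g t a

/-- Per-player factor of the trajectory probability, truncated at cutoff `t`. -/
def pii (i : Fin N) (gi : Fin T → (Fin T → ∀ j, A j) → (Fin T → X i) → A i → ℝ)
    (t : ℕ) (xi : Fin T → X i) (a : Fin T → ∀ j, A j) : ℝ :=
  (if h : 0 < T then (if 0 < t then Q1 i (xi ⟨0, h⟩) else 1) else 1) *
  ∏ s : Fin T,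
    ((if (s : ℕ) + 1 < t then gi s a xi (a s i) else 1) *
     (if h : (s : ℕ) + 1 < T then
        (if (s : ℕ) + 1 < t then
          Qk i ⟨(s : ℕ) + 1, h⟩ (xi s) (a s) (xi ⟨(s : ℕ) + 1, h⟩) else 1)
      else 1))

lemma pii_zero (i : Fin N) (gi : Fin T → (Fin T → ∀ j, A j) → (Fin T → X i) → A i → ℝ)
    (xi : Fin T → X i) (a : Fin T → ∀ j, A j) :
    pii N T X A Q1 Qk i gi 0 xi a = 1 := by
  unfold pii
  rw [Finset.prod_eq_one]
  · simp
  · intro s _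
    rw [if_neg (by omega)]
    by_cases h : (s : ℕ) + 1 < T
    · rw [dif_pos h, if_neg (by omega), one_mul]
    · rw [dif_neg h, one_mul]

lemma pii_one (i : Fin N) (gi : Fin T → (Fin T → ∀ j, A j) → (Fin T → X i) → A i → ℝ)
    (xi : Fin T → X i) (a : Fin T → ∀ j, A j) :
    pii N T X A Q1 Qk i gi 1 xi a = (if h : 0 < T then Q1 i (xi ⟨0, h⟩) else 1) := by
  unfold pii
  rw [Finset.prod_eq_one, mul_one]
  · by_cases h : 0 < T
    · rw [dif_pos h, dif_pos h, if_pos (by omega)]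
    · rw [dif_neg h, dif_neg h]
  · intro s _
    rw [if_neg (by omega)]
    by_cases h : (s : ℕ) + 1 < T
    · rw [dif_pos h, if_neg (by omega), one_mul]
    · rw [dif_neg h, one_mul]

lemma pii_congr (i : Fin N) (gi : Fin T → (Fin T → ∀ j, A j) → (Fin T → X i) → A i → ℝ)
    (hci : ∀ (t₀ : Fin T) a a' xi xi',
      (∀ s : Fin T, (s : ℕ) < (t₀ : ℕ) → a s = a' s) →
      (∀ s : Fin T, (s : ℕ) ≤ (t₀ : ℕ) → xi s = xi' s) →
      gi t₀ a xi = gi t₀ a' xi')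
    (t : ℕ) {xi xi' : Fin T → X i} {a a' : Fin T → ∀ j, A j}
    (ha : ∀ s : Fin T, (s : ℕ) + 1 < t → a s = a' s)
    (hx : ∀ s : Fin T, (s : ℕ) < t → xi s = xi' s) :
    pii N T X A Q1 Qk i gi t xi a = pii N T X A Q1 Qk i gi t xi' a' := by
  unfold pii
  congr 1
  · by_cases h : 0 < T
    · rw [dif_pos h, dif_pos h]
      by_cases h0 : 0 < t
      · rw [if_pos h0, if_pos h0, hx ⟨0, h⟩ h0]
      · rw [if_neg h0, if_neg h0]
    · rw [dif_neg h, dif_neg h]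
  · refine Finset.prod_congr rfl fun s _ => ?_
    by_cases hT' : (s : ℕ) + 1 < T
    · rw [dif_pos hT', dif_pos hT']
      by_cases hs : (s : ℕ) + 1 < t
      · have hg : gi s a xi = gi s a' xi' :=
          hci s a a' xi xi' (fun r hr => ha r (by omega)) (fun r hr => hx r (by omega))
        rw [if_pos hs, if_pos hs, if_pos hs, if_pos hs, hg, ha s hs, hx s (by omega),
          hx ⟨(s : ℕ) + 1, hT'⟩ hs]
      · rw [if_neg hs, if_neg hs, if_neg hs, if_neg hs]
    · rw [dif_neg hT', dif_neg hT']
      by_cases hs : (s : ℕ) + 1 < t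
      · have hg : gi s a xi = gi s a' xi' :=
          hci s a a' xi xi' (fun r hr => ha r (by omega)) (fun r hr => hx r (by omega))
        rw [if_pos hs, if_pos hs, hg, ha s hs]
      · rw [if_neg hs, if_neg hs]
set_option linter.unusedSectionVars false

lemma pii_succ (i : Fin N) (gi : Fin T → (Fin T → ∀ j, A j) → (Fin T → X i) → A i → ℝ)
    (t : ℕ) (h0 : 0 < t) (hT : t ≤ T) (q : Fin T) (hq : (q : ℕ) + 1 = t)
    (xi : Fin T → X i) (a : Fin T → ∀ j, A j) :
    pii N T X A Q1 Qk i gi (t + 1) xi a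
      = pii N T X A Q1 Qk i gi t xi a *
        (gi q a xi (a q i) *
          (if h : t < T then Qk i ⟨t, h⟩ (xi q) (a q) (xi ⟨t, h⟩) else 1)) := by
  unfold pii
  rw [mul_assoc]
  congr 1
  · rw [dif_pos (by omega : 0 < T), dif_pos (by omega : 0 < T), if_pos (by omega),
      if_pos (by omega)]
  · have key : ∀ s : Fin T,
        ((if (s : ℕ) + 1 < t + 1 then gi s a xi (a s i) else 1) *
          (if h : (s : ℕ) + 1 < T then
            (if (s : ℕ) + 1 < t + 1 then
              Qk i ⟨(s : ℕ) + 1, h⟩ (xi s) (a s) (xi ⟨(s : ℕ) + 1, h⟩) else 1)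
          else 1))
        = ((if (s : ℕ) + 1 < t then gi s a xi (a s i) else 1) *
            (if h : (s : ℕ) + 1 < T then
              (if (s : ℕ) + 1 < t then
                Qk i ⟨(s : ℕ) + 1, h⟩ (xi s) (a s) (xi ⟨(s : ℕ) + 1, h⟩) else 1)
            else 1)) *
          (if s = q then
            gi q a xi (a q i) *
              (if h : t < T then Qk i ⟨t, h⟩ (xi q) (a q) (xi ⟨t, h⟩) else 1)
          else 1) := by
      intro s
      by_cases hsq : s = q
      · rw [if_pos hsq, hsq]
        rw [if_pos (by omega), if_neg (by omega), one_mul]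
        by_cases hlt : t < T
        · have hT' : (q : ℕ) + 1 < T := by omega
          have hfin : (⟨(q : ℕ) + 1, hT'⟩ : Fin T) = ⟨t, hlt⟩ := by
            apply Fin.ext; simpa using hq
          rw [dif_pos hT', dif_pos hT', if_pos (by omega), if_neg (by omega), hfin,
            dif_pos hlt]
          ring
        · have hT' : ¬ (q : ℕ) + 1 < T := by omega
          rw [dif_neg hT', dif_neg hT', dif_neg hlt]
          ring
      · have hv : (s : ℕ) + 1 ≠ t := fun h => hsq (Fin.ext (by omega))
        rw [if_neg hsq, mul_one]
        by_cases hs : (s : ℕ) + 1 < t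
        · rw [if_pos (by omega), if_pos hs]
          congr 1
          by_cases hT' : (s : ℕ) + 1 < T
          · rw [dif_pos hT', dif_pos hT', if_pos (by omega), if_pos hs]
          · rw [dif_neg hT', dif_neg hT']
        · rw [if_neg (by omega), if_neg hs]
          congr 1
          by_cases hT' : (s : ℕ) + 1 < T
          · rw [dif_pos hT', dif_pos hT', if_neg (by omega), if_neg hs]
          · rw [dif_neg hT', dif_neg hT']
    calc (∏ s : Fin T,
        ((if (s : ℕ) + 1 < t + 1 then gi s a xi (a s i) else 1) *
          (if h : (s : ℕ) + 1 < T then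
            (if (s : ℕ) + 1 < t + 1 then
              Qk i ⟨(s : ℕ) + 1, h⟩ (xi s) (a s) (xi ⟨(s : ℕ) + 1, h⟩) else 1)
          else 1)))
        = ∏ s : Fin T,
          (((if (s : ℕ) + 1 < t then gi s a xi (a s i) else 1) *
            (if h : (s : ℕ) + 1 < T then
              (if (s : ℕ) + 1 < t then
                Qk i ⟨(s : ℕ) + 1, h⟩ (xi s) (a s) (xi ⟨(s : ℕ) + 1, h⟩) else 1)
            else 1)) *
            (if s = q then
              gi q a xi (a q i) *
                (if h : t < T then Qk i ⟨t, h⟩ (xi q) (a q) (xi ⟨t, h⟩) else 1)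
            else 1)) := Finset.prod_congr rfl fun s _ => key s
      _ = _ := by
          rw [Finset.prod_mul_distrib,
            Finset.prod_ite_eq' Finset.univ q
              (fun _ => gi q a xi (a q i) *
                (if h : t < T then Qk i ⟨t, h⟩ (xi q) (a q) (xi ⟨t, h⟩) else 1)),
            if_pos (Finset.mem_univ q)]

lemma trajP_eq_prod (g : Strat N T X A) (x : Fin T → ∀ i, X i) (a : Fin T → ∀ i, A i) :
    trajP N T X A Q1 Qk g x a
      = ∏ i, pii N T X A Q1 Qk i (g i) (T + 1) (fun s => x s i) a := by
  unfold trajP pii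
  conv_rhs => rw [Finset.prod_mul_distrib]
  congr 1
  · by_cases h : 0 < T
    · rw [dif_pos h]
      exact Finset.prod_congr rfl fun i _ => by rw [dif_pos h, if_pos (by omega)]
    · rw [dif_neg h]
      exact (Finset.prod_eq_one fun i _ => by rw [dif_neg h]).symm
  · conv_rhs => rw [Finset.prod_comm]
    refine Finset.prod_congr rfl fun s _ => ?_
    rw [Finset.prod_mul_distrib]
    congr 1
    · exact Finset.prod_congr rfl fun i _ => by rw [if_pos (by omega : (s : ℕ) + 1 < T + 1)]
    · refine Finset.prod_congr rfl fun i _ => ?_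
      by_cases h : (s : ℕ) + 1 < T
      · rw [dif_pos h, dif_pos h, if_pos (by omega)]
      · rw [dif_neg h, dif_neg h]
lemma xaMarg_top (g : Strat N T X A) (x : Fin T → ∀ i, X i) (a : Fin T → ∀ i, A i) :
    xaMarg N T X A Q1 Qk g (T + 1) x a = trajP N T X A Q1 Qk g x a := by
  unfold xaMarg
  have point : ∀ (x' : Fin T → ∀ i, X i) (a' : Fin T → ∀ i, A i),
      (if (∀ s : Fin T, (s : ℕ) + 1 < T + 1 → a' s = a s) ∧
          (∀ s : Fin T, (s : ℕ) < T + 1 → x' s = x s)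
        then trajP N T X A Q1 Qk g x' a' else 0)
      = (if a' = a then (if x' = x then trajP N T X A Q1 Qk g x' a' else 0) else 0) := by
    intro x' a'
    by_cases h1 : a' = a
    · by_cases h2 : x' = x
      · subst h1; subst h2
        rw [if_pos rfl, if_pos rfl, if_pos ⟨fun _ _ => rfl, fun _ _ => rfl⟩]
      · rw [if_pos h1, if_neg h2, if_neg]
        rintro ⟨-, hx⟩
        exact h2 (funext fun s => hx s (by omega))
    · rw [if_neg h1, if_neg]
      rintro ⟨ha, -⟩
      exact h1 (funext fun s => ha s (by omega))
  calc (∑ x' : Fin T → ∀ i, X i, ∑ a' : Fin T → ∀ i, A i,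
        if (∀ s : Fin T, (s : ℕ) + 1 < T + 1 → a' s = a s) ∧
            (∀ s : Fin T, (s : ℕ) < T + 1 → x' s = x s)
          then trajP N T X A Q1 Qk g x' a' else 0)
      = ∑ x' : Fin T → ∀ i, X i, ∑ a' : Fin T → ∀ i, A i,
          (if a' = a then (if x' = x then trajP N T X A Q1 Qk g x' a' else 0) else 0) :=
        Finset.sum_congr rfl fun x' _ => Finset.sum_congr rfl fun a' _ => point x' a'
    _ = ∑ x' : Fin T → ∀ i, X i, (if x' = x then trajP N T X A Q1 Qk g x' a else 0) := by
        refine Finset.sum_congr rfl fun x' _ => ?_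
        rw [Finset.sum_ite_eq' Finset.univ a
          (fun a' => if x' = x then trajP N T X A Q1 Qk g x' a' else 0),
          if_pos (Finset.mem_univ _)]
    _ = trajP N T X A Q1 Qk g x a := by
        rw [Finset.sum_ite_eq' Finset.univ x (fun x' => trajP N T X A Q1 Qk g x' a),
          if_pos (Finset.mem_univ _)]

lemma split_zero (g : Strat N T X A) (hT : 0 < T)
    (x : Fin T → ∀ i, X i) (a : Fin T → ∀ i, A i) :
    xaMarg N T X A Q1 Qk g 0 x a
      = ∑ χ : ∀ i, X i, xaMarg N T X A Q1 Qk g 1 (Function.update x ⟨0, hT⟩ χ) a := by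
  unfold xaMarg
  have point : ∀ (x' : Fin T → ∀ i, X i) (a' : Fin T → ∀ i, A i),
      (if (∀ s : Fin T, (s : ℕ) + 1 < 0 → a' s = a s) ∧
          (∀ s : Fin T, (s : ℕ) < 0 → x' s = x s)
        then trajP N T X A Q1 Qk g x' a' else 0)
      = ∑ χ : ∀ i, X i,
          (if (∀ s : Fin T, (s : ℕ) + 1 < 1 → a' s = a s) ∧
              (∀ s : Fin T, (s : ℕ) < 1 → x' s = Function.update x ⟨0, hT⟩ χ s)
            then trajP N T X A Q1 Qk g x' a' else 0) := by
    intro x' a'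
    have hcong : ∀ χ : ∀ i, X i,
        (if (∀ s : Fin T, (s : ℕ) + 1 < 1 → a' s = a s) ∧
            (∀ s : Fin T, (s : ℕ) < 1 → x' s = Function.update x ⟨0, hT⟩ χ s)
          then trajP N T X A Q1 Qk g x' a' else 0)
        = (if χ = x' ⟨0, hT⟩ then trajP N T X A Q1 Qk g x' a' else 0) := by
      intro χ
      refine if_congr ⟨?_, ?_⟩ rfl rfl
      · rintro ⟨-, hx⟩
        have := hx ⟨0, hT⟩ (show (0:ℕ) < 1 by omega)
        rw [Function.update_self] at this
        exact this.symm
      · intro h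
        refine ⟨fun s hs => absurd hs (by omega), fun s hs => ?_⟩
        have hs0 : s = ⟨0, hT⟩ := Fin.ext (show (s:ℕ) = 0 by omega)
        rw [hs0, Function.update_self, h]
    rw [Finset.sum_congr rfl fun χ _ => hcong χ,
      Finset.sum_ite_eq' Finset.univ (x' ⟨0, hT⟩)
        (fun _ => trajP N T X A Q1 Qk g x' a'), if_pos (Finset.mem_univ _),
      if_pos ⟨fun s hs => absurd hs (by omega), fun s hs => absurd hs (by omega)⟩]
  calc (∑ x' : Fin T → ∀ i, X i, ∑ a' : Fin T → ∀ i, A i,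
        if (∀ s : Fin T, (s : ℕ) + 1 < 0 → a' s = a s) ∧
            (∀ s : Fin T, (s : ℕ) < 0 → x' s = x s)
          then trajP N T X A Q1 Qk g x' a' else 0)
      = ∑ x' : Fin T → ∀ i, X i, ∑ a' : Fin T → ∀ i, A i, ∑ χ : ∀ i, X i,
          (if (∀ s : Fin T, (s : ℕ) + 1 < 1 → a' s = a s) ∧
              (∀ s : Fin T, (s : ℕ) < 1 → x' s = Function.update x ⟨0, hT⟩ χ s)
            then trajP N T X A Q1 Qk g x' a' else 0) :=
        Finset.sum_congr rfl fun x' _ => Finset.sum_congr rfl fun a' _ => point x' a'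
    _ = _ :=
        (Finset.sum_congr rfl fun x' _ => Finset.sum_comm).trans Finset.sum_comm
lemma split_mid (g : Strat N T X A) (t : ℕ) (h0 : 0 < t)
    (p q : Fin T) (hp : (p : ℕ) = t) (hq : (q : ℕ) + 1 = t)
    (x : Fin T → ∀ i, X i) (a : Fin T → ∀ i, A i) :
    xaMarg N T X A Q1 Qk g t x a
      = ∑ χ : ∀ i, X i, ∑ β : ∀ i, A i,
          xaMarg N T X A Q1 Qk g (t + 1)
            (Function.update x p χ) (Function.update a q β) := by
  unfold xaMarg
  have point : ∀ (x' : Fin T → ∀ i, X i) (a' : Fin T → ∀ i, A i),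
      (if (∀ s : Fin T, (s : ℕ) + 1 < t → a' s = a s) ∧
          (∀ s : Fin T, (s : ℕ) < t → x' s = x s)
        then trajP N T X A Q1 Qk g x' a' else 0)
      = ∑ χ : ∀ i, X i, ∑ β : ∀ i, A i,
          (if (∀ s : Fin T, (s : ℕ) + 1 < t + 1 → a' s = Function.update a q β s) ∧
              (∀ s : Fin T, (s : ℕ) < t + 1 → x' s = Function.update x p χ s)
            then trajP N T X A Q1 Qk g x' a' else 0) := by
    intro x' a'
    have hcong : ∀ (χ : ∀ i, X i) (β : ∀ i, A i),
        (if (∀ s : Fin T, (s : ℕ) + 1 < t + 1 → a' s = Function.update a q β s) ∧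
            (∀ s : Fin T, (s : ℕ) < t + 1 → x' s = Function.update x p χ s)
          then trajP N T X A Q1 Qk g x' a' else 0)
        = (if χ = x' p then (if β = a' q then
            (if (∀ s : Fin T, (s : ℕ) + 1 < t → a' s = a s) ∧
                (∀ s : Fin T, (s : ℕ) < t → x' s = x s)
              then trajP N T X A Q1 Qk g x' a' else 0) else 0) else 0) := by
      intro χ β
      by_cases h1 : χ = x' p
      · by_cases h2 : β = a' q
        · subst h1; subst h2
          rw [if_pos rfl, if_pos rfl]
          refine if_congr ⟨?_, ?_⟩ rfl rfl
          · rintro ⟨ha, hx⟩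
            constructor
            · intro s hs
              have hsq : s ≠ q := fun hh => by rw [hh] at hs; omega
              have := ha s (by omega)
              rwa [Function.update_of_ne hsq] at this
            · intro s hs
              have hsp : s ≠ p := fun hh => by rw [hh] at hs; omega
              have := hx s (by omega)
              rwa [Function.update_of_ne hsp] at this
          · rintro ⟨ha, hx⟩
            constructor
            · intro s hs
              by_cases hsq : s = q
              · rw [hsq, Function.update_self]
              · have hv : (s : ℕ) ≠ (q : ℕ) := fun hh => hsq (Fin.ext hh)
                rw [Function.update_of_ne hsq]
                exact ha s (by omega)
            · intro s hs
              by_cases hsp : s = p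
              · rw [hsp, Function.update_self]
              · have hv : (s : ℕ) ≠ (p : ℕ) := fun hh => hsp (Fin.ext hh)
                rw [Function.update_of_ne hsp]
                exact hx s (by omega)
        · rw [if_neg h2, if_pos h1, if_neg]
          rintro ⟨ha, -⟩
          have := ha q (by omega)
          rw [Function.update_self] at this
          exact h2 this.symm
      · rw [if_neg h1, if_neg]
        rintro ⟨-, hx⟩
        have := hx p (by omega)
        rw [Function.update_self] at this
        exact h1 this.symm
    calc (if (∀ s : Fin T, (s : ℕ) + 1 < t → a' s = a s) ∧
            (∀ s : Fin T, (s : ℕ) < t → x' s = x s)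
          then trajP N T X A Q1 Qk g x' a' else 0)
        = ∑ χ : ∀ i, X i, (if χ = x' p then ∑ β : ∀ i, A i, (if β = a' q then
            (if (∀ s : Fin T, (s : ℕ) + 1 < t → a' s = a s) ∧
                (∀ s : Fin T, (s : ℕ) < t → x' s = x s)
              then trajP N T X A Q1 Qk g x' a' else 0) else 0) else 0) := by
          rw [Finset.sum_ite_eq' Finset.univ (x' p), if_pos (Finset.mem_univ _),
            Finset.sum_ite_eq' Finset.univ (a' q), if_pos (Finset.mem_univ _)]
      _ = _ := by
          refine Finset.sum_congr rfl fun χ _ => ?_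
          by_cases h1 : χ = x' p
          · rw [if_pos h1]
            exact Finset.sum_congr rfl fun β _ =>
              ((hcong χ β).trans (by rw [if_pos h1])).symm
          · rw [if_neg h1]
            exact (Finset.sum_eq_zero fun β _ =>
              (hcong χ β).trans (by rw [if_neg h1])).symm
  calc (∑ x' : Fin T → ∀ i, X i, ∑ a' : Fin T → ∀ i, A i,
        if (∀ s : Fin T, (s : ℕ) + 1 < t → a' s = a s) ∧
            (∀ s : Fin T, (s : ℕ) < t → x' s = x s)
          then trajP N T X A Q1 Qk g x' a' else 0)
      = ∑ x' : Fin T → ∀ i, X i, ∑ a' : Fin T → ∀ i, A i, ∑ χ : ∀ i, X i, ∑ β : ∀ i, A i,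
          (if (∀ s : Fin T, (s : ℕ) + 1 < t + 1 → a' s = Function.update a q β s) ∧
              (∀ s : Fin T, (s : ℕ) < t + 1 → x' s = Function.update x p χ s)
            then trajP N T X A Q1 Qk g x' a' else 0) :=
        Finset.sum_congr rfl fun x' _ => Finset.sum_congr rfl fun a' _ => point x' a'
    _ = _ := by
        refine Eq.trans (Finset.sum_congr rfl fun x' _ =>
          Eq.trans Finset.sum_comm (Finset.sum_congr rfl fun χ _ => Finset.sum_comm)) ?_
        exact Eq.trans Finset.sum_comm (Finset.sum_congr rfl fun χ _ => Finset.sum_comm)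

lemma split_last (g : Strat N T X A) (q : Fin T) (hq : (q : ℕ) + 1 = T)
    (x : Fin T → ∀ i, X i) (a : Fin T → ∀ i, A i) :
    xaMarg N T X A Q1 Qk g T x a
      = ∑ β : ∀ i, A i, xaMarg N T X A Q1 Qk g (T + 1) x (Function.update a q β) := by
  unfold xaMarg
  have point : ∀ (x' : Fin T → ∀ i, X i) (a' : Fin T → ∀ i, A i),
      (if (∀ s : Fin T, (s : ℕ) + 1 < T → a' s = a s) ∧
          (∀ s : Fin T, (s : ℕ) < T → x' s = x s)
        then trajP N T X A Q1 Qk g x' a' else 0)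
      = ∑ β : ∀ i, A i,
          (if (∀ s : Fin T, (s : ℕ) + 1 < T + 1 → a' s = Function.update a q β s) ∧
              (∀ s : Fin T, (s : ℕ) < T + 1 → x' s = x s)
            then trajP N T X A Q1 Qk g x' a' else 0) := by
    intro x' a'
    have hcong : ∀ (β : ∀ i, A i),
        (if (∀ s : Fin T, (s : ℕ) + 1 < T + 1 → a' s = Function.update a q β s) ∧
            (∀ s : Fin T, (s : ℕ) < T + 1 → x' s = x s)
          then trajP N T X A Q1 Qk g x' a' else 0)
        = (if β = a' q then
            (if (∀ s : Fin T, (s : ℕ) + 1 < T → a' s = a s) ∧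
                (∀ s : Fin T, (s : ℕ) < T → x' s = x s)
              then trajP N T X A Q1 Qk g x' a' else 0) else 0) := by
      intro β
      by_cases h2 : β = a' q
      · subst h2
        rw [if_pos rfl]
        refine if_congr ⟨?_, ?_⟩ rfl rfl
        · rintro ⟨ha, hx⟩
          refine ⟨?_, fun s hs => hx s (by omega)⟩
          intro s hs
          have hsq : s ≠ q := fun hh => by rw [hh] at hs; omega
          have := ha s (by omega)
          rwa [Function.update_of_ne hsq] at this
        · rintro ⟨ha, hx⟩
          refine ⟨?_, fun s _ => hx s s.isLt⟩
          intro s hs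
          by_cases hsq : s = q
          · rw [hsq, Function.update_self]
          · have hv : (s : ℕ) ≠ (q : ℕ) := fun hh => hsq (Fin.ext hh)
            rw [Function.update_of_ne hsq]
            exact ha s (by omega)
      · rw [if_neg h2, if_neg]
        rintro ⟨ha, -⟩
        have := ha q (by omega)
        rw [Function.update_self] at this
        exact h2 this.symm
    rw [Finset.sum_congr rfl fun β _ => hcong β,
      Finset.sum_ite_eq' Finset.univ (a' q), if_pos (Finset.mem_univ _)]
  calc (∑ x' : Fin T → ∀ i, X i, ∑ a' : Fin T → ∀ i, A i,
        if (∀ s : Fin T, (s : ℕ) + 1 < T → a' s = a s) ∧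
            (∀ s : Fin T, (s : ℕ) < T → x' s = x s)
          then trajP N T X A Q1 Qk g x' a' else 0)
      = ∑ x' : Fin T → ∀ i, X i, ∑ a' : Fin T → ∀ i, A i, ∑ β : ∀ i, A i,
          (if (∀ s : Fin T, (s : ℕ) + 1 < T + 1 → a' s = Function.update a q β s) ∧
              (∀ s : Fin T, (s : ℕ) < T + 1 → x' s = x s)
            then trajP N T X A Q1 Qk g x' a' else 0) :=
        Finset.sum_congr rfl fun x' _ => Finset.sum_congr rfl fun a' _ => point x' a'
    _ = _ := by
        refine Eq.trans (Finset.sum_congr rfl fun x' _ => Finset.sum_comm) ?_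
        exact Finset.sum_comm
lemma xaMarg_eq (g : Strat N T X A) (hK : StochKer N T X A Q1 Qk)
    (hg : Stochastic N T X A g) (hc : Causal N T X A g) :
    ∀ k t, t + k = T + 1 → ∀ (x : Fin T → ∀ i, X i) (a : Fin T → ∀ i, A i),
      xaMarg N T X A Q1 Qk g t x a
        = ∏ i, pii N T X A Q1 Qk i (g i) t (fun s => x s i) a := by
  intro k
  induction k with
  | zero =>
      intro t htk x a
      have ht : t = T + 1 := by omega
      subst ht
      rw [xaMarg_top N T X A Q1 Qk g x a, trajP_eq_prod N T X A Q1 Qk g x a]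
  | succ k ih =>
      intro t htk x a
      have htT : t ≤ T := by omega
      rcases Nat.eq_zero_or_pos t with h0 | h0
      · subst h0
        rcases Nat.eq_zero_or_pos T with hT0 | hT0
        · have e1 : xaMarg N T X A Q1 Qk g 0 x a = xaMarg N T X A Q1 Qk g 1 x a := by
            unfold xaMarg
            refine Finset.sum_congr rfl fun x' _ => Finset.sum_congr rfl fun a' _ => ?_
            refine if_congr ⟨?_, ?_⟩ rfl rfl
            · rintro -
              exact ⟨fun s _ => absurd s.isLt (by omega), fun s _ => absurd s.isLt (by omega)⟩
            · rintro -
              exact ⟨fun s hs => absurd hs (by omega), fun s hs => absurd hs (by omega)⟩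
          rw [e1, ih 1 (by omega) x a]
          refine Finset.prod_congr rfl fun i _ => ?_
          rw [pii_one N T X A Q1 Qk i (g i), pii_zero N T X A Q1 Qk i (g i),
            dif_neg (by omega : ¬ 0 < T)]
        · rw [split_zero N T X A Q1 Qk g hT0 x a]
          have e2 : ∀ χ : ∀ i, X i,
              xaMarg N T X A Q1 Qk g 1 (Function.update x ⟨0, hT0⟩ χ) a
                = ∏ i, Q1 i (χ i) := by
            intro χ
            rw [ih 1 (by omega) _ a]
            refine Finset.prod_congr rfl fun i _ => ?_
            rw [pii_one N T X A Q1 Qk i (g i), dif_pos hT0]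
            simp only [Function.update_self]
          rw [Finset.sum_congr rfl fun χ _ => e2 χ]
          have e3 : (∑ χ : ∀ i, X i, ∏ i, Q1 i (χ i)) = 1 := by
            rw [← Fintype.prod_sum (fun i (c : X i) => Q1 i c)]
            exact Finset.prod_eq_one fun i _ => (hK.1 i).2
          rw [e3]
          exact (Finset.prod_eq_one fun i _ => pii_zero N T X A Q1 Qk i (g i) _ a).symm
      · have hqv : t - 1 < T := by omega
        set q : Fin T := ⟨t - 1, hqv⟩ with hqdef
        have hq1 : (q : ℕ) + 1 = t := by show t - 1 + 1 = t; omega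
        rcases Nat.lt_or_ge t T with hlt | hge
        · -- middle case : 0 < t < T
          set p : Fin T := ⟨t, hlt⟩ with hpdef
          have hnqp : q ≠ p := by
            intro hh
            have : (q : ℕ) = (p : ℕ) := by rw [hh]
            have hqv' : (q : ℕ) = t - 1 := rfl
            have hpv : (p : ℕ) = t := rfl
            omega
          rw [split_mid N T X A Q1 Qk g t h0 p q rfl hq1 x a]
          have hterm : ∀ (χ : ∀ i, X i) (β : ∀ i, A i),
              xaMarg N T X A Q1 Qk g (t + 1)
                  (Function.update x p χ) (Function.update a q β)
                = (∏ i, pii N T X A Q1 Qk i (g i) t (fun s => x s i) a) *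
                  ((∏ i, g i q a (fun s => x s i) (β i)) *
                    (∏ i, Qk i ⟨t, hlt⟩ (x q i) β (χ i))) := by
            intro χ β
            rw [ih (t + 1) (by omega)]
            conv_rhs => rw [← Finset.prod_mul_distrib, ← Finset.prod_mul_distrib]
            refine Finset.prod_congr rfl fun i _ => ?_
            rw [pii_succ N T X A Q1 Qk i (g i) t h0 htT q hq1, dif_pos hlt]
            have e1 : pii N T X A Q1 Qk i (g i) t
                (fun s => Function.update x p χ s i) (Function.update a q β)
                = pii N T X A Q1 Qk i (g i) t (fun s => x s i) a := by
              refine pii_congr N T X A Q1 Qk i (g i) (hc i) t ?_ ?_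
              · intro s hs
                rw [Function.update_of_ne (a' := q)
                  (fun hh => by rw [hh] at hs; rw [hq1] at hs; omega)]
              · intro s hs
                rw [Function.update_of_ne (a' := p)
                  (fun hh => by rw [hh] at hs; have : (p : ℕ) = t := rfl; omega)]
            have e2 : g i q (Function.update a q β)
                  (fun s => Function.update x p χ s i)
                = g i q a (fun s => x s i) := by
              refine hc i q _ _ _ _ ?_ ?_
              · intro s hs
                have hs' : (s : ℕ) < t - 1 := hs
                rw [Function.update_of_ne (a' := q) (fun hh => by rw [hh] at hs'; omega)]
              · intro s hs
                have hs' : (s : ℕ) ≤ t - 1 := hs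
                rw [Function.update_of_ne (a' := p)
                  (fun hh => by rw [hh] at hs'; have : (p : ℕ) = t := rfl; omega)]
            rw [e1, e2]
            simp only [Function.update_self, Function.update_of_ne hnqp, ← hpdef]
          rw [Finset.sum_congr rfl fun χ _ =>
            Finset.sum_congr rfl fun β _ => hterm χ β]
          rw [Finset.sum_comm]
          have e4 : ∀ β : ∀ i, A i,
              (∑ χ : ∀ i, X i,
                (∏ i, pii N T X A Q1 Qk i (g i) t (fun s => x s i) a) *
                  ((∏ i, g i q a (fun s => x s i) (β i)) *
                    (∏ i, Qk i ⟨t, hlt⟩ (x q i) β (χ i))))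
              = (∏ i, pii N T X A Q1 Qk i (g i) t (fun s => x s i) a) *
                  (∏ i, g i q a (fun s => x s i) (β i)) := by
            intro β
            rw [← Finset.mul_sum, ← Finset.mul_sum]
            have e5 : (∑ χ : ∀ i, X i, ∏ i, Qk i ⟨t, hlt⟩ (x q i) β (χ i)) = 1 := by
              rw [← Fintype.prod_sum (fun i (c : X i) => Qk i ⟨t, hlt⟩ (x q i) β c)]
              exact Finset.prod_eq_one fun i _ => (hK.2 i ⟨t, hlt⟩ (x q i) β).2
            rw [e5, mul_one]
          rw [Finset.sum_congr rfl fun β _ => e4 β, ← Finset.mul_sum]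
          have e6 : (∑ β : ∀ i, A i, ∏ i, g i q a (fun s => x s i) (β i)) = 1 := by
            rw [← Fintype.prod_sum (fun i (b : A i) => g i q a (fun s => x s i) b)]
            exact Finset.prod_eq_one fun i _ => (hg i q a (fun s => x s i)).2
          rw [e6, mul_one]
        · -- last case : t = T
          have hteq : t = T := by omega
          rw [hteq] at hq1 h0 htk ⊢
          rw [split_last N T X A Q1 Qk g q hq1 x a]
          have hterm : ∀ β : ∀ i, A i,
              xaMarg N T X A Q1 Qk g (T + 1) x (Function.update a q β)
                = (∏ i, pii N T X A Q1 Qk i (g i) T (fun s => x s i) a) *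
                  (∏ i, g i q a (fun s => x s i) (β i)) := by
            intro β
            rw [ih (T + 1) (by omega)]
            conv_rhs => rw [← Finset.prod_mul_distrib]
            refine Finset.prod_congr rfl fun i _ => ?_
            rw [pii_succ N T X A Q1 Qk i (g i) T h0 le_rfl q hq1,
              dif_neg (lt_irrefl T), mul_one]
            have e1 : pii N T X A Q1 Qk i (g i) T (fun s => x s i) (Function.update a q β)
                = pii N T X A Q1 Qk i (g i) T (fun s => x s i) a := by
              refine pii_congr N T X A Q1 Qk i (g i) (hc i) T ?_ (fun s _ => rfl)
              intro s hs
              rw [Function.update_of_ne (a' := q)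
                (fun hh => by rw [hh] at hs; rw [hq1] at hs; omega)]
            have e2 : g i q (Function.update a q β) (fun s => x s i)
                = g i q a (fun s => x s i) := by
              refine hc i q _ _ _ _ ?_ (fun s _ => rfl)
              intro s hs
              have hs' : (s : ℕ) < t - 1 := hs
              rw [Function.update_of_ne (a' := q) (fun hh => by rw [hh] at hs'; omega)]
            rw [e1, e2, Function.update_self]
          rw [Finset.sum_congr rfl fun β _ => hterm β, ← Finset.mul_sum]
          have e6 : (∑ β : ∀ i, A i, ∏ i, g i q a (fun s => x s i) (β i)) = 1 := by
            rw [← Fintype.prod_sum (fun i (b : A i) => g i q a (fun s => x s i) b)]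
            exact Finset.prod_eq_one fun i _ => (hg i q a (fun s => x s i)).2
          rw [e6, mul_one]
def sig (j : Fin N) (gj : Fin T → (Fin T → ∀ l, A l) → (Fin T → X j) → A j → ℝ)
    (t : ℕ) (a : Fin T → ∀ i, A i) (dj : X j) : ℝ :=
  ∑ yj : Fin T → X j,
    if (∀ s : Fin T, ¬ ((s : ℕ) < t) → yj s = dj)
      then pii N T X A Q1 Qk j gj t yj a else 0

lemma group (g : Strat N T X A) (t : ℕ) (d : ∀ j, X j)
    (W : (Fin T → ∀ j, X j) → Prop)
    (hW : ∀ x' : Fin T → ∀ j, X j,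
      W x' ↔ W (fun s j => if (s : ℕ) < t then x' s j else d j))
    (a : Fin T → ∀ i, A i) :
    (∑ x' : Fin T → ∀ j, X j, ∑ a' : Fin T → ∀ j, A j,
        if (∀ s : Fin T, (s : ℕ) + 1 < t → a' s = a s) ∧ W x'
          then trajP N T X A Q1 Qk g x' a' else 0)
      = ∑ y : Fin T → ∀ j, X j,
          if (∀ (s : Fin T) (j : Fin N), ¬ ((s : ℕ) < t) → y s j = d j) ∧ W y
            then xaMarg N T X A Q1 Qk g t y a else 0 := by
  have hy : ∀ y : Fin T → ∀ j, X j,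
      (if (∀ (s : Fin T) (j : Fin N), ¬ ((s : ℕ) < t) → y s j = d j) ∧ W y
        then xaMarg N T X A Q1 Qk g t y a else 0)
      = ∑ x' : Fin T → ∀ j, X j, ∑ a' : Fin T → ∀ j, A j,
          if ((∀ (s : Fin T) (j : Fin N), ¬ ((s : ℕ) < t) → y s j = d j) ∧ W y) ∧
              ((∀ s : Fin T, (s : ℕ) + 1 < t → a' s = a s) ∧
                (∀ s : Fin T, (s : ℕ) < t → x' s = y s))
            then trajP N T X A Q1 Qk g x' a' else 0 := by
    intro y
    by_cases hP : (∀ (s : Fin T) (j : Fin N), ¬ ((s : ℕ) < t) → y s j = d j) ∧ W y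
    · rw [if_pos hP]
      unfold xaMarg
      refine Finset.sum_congr rfl fun x' _ => Finset.sum_congr rfl fun a' _ => ?_
      exact if_congr ⟨fun h => ⟨hP, h⟩, fun h => h.2⟩ rfl rfl
    · rw [if_neg hP]
      exact (Finset.sum_eq_zero fun x' _ =>
        Finset.sum_eq_zero fun a' _ => if_neg fun h => hP h.1).symm
  have hinner : ∀ (x' : Fin T → ∀ j, X j) (a' : Fin T → ∀ j, A j),
      (∑ y : Fin T → ∀ j, X j,
        if ((∀ (s : Fin T) (j : Fin N), ¬ ((s : ℕ) < t) → y s j = d j) ∧ W y) ∧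
            ((∀ s : Fin T, (s : ℕ) + 1 < t → a' s = a s) ∧
              (∀ s : Fin T, (s : ℕ) < t → x' s = y s))
          then trajP N T X A Q1 Qk g x' a' else 0)
      = (if (∀ s : Fin T, (s : ℕ) + 1 < t → a' s = a s) ∧ W x'
          then trajP N T X A Q1 Qk g x' a' else 0) := by
    intro x' a'
    refine Eq.trans (Finset.sum_eq_single
        (fun (s : Fin T) (j : Fin N) => if (s : ℕ) < t then x' s j else d j)
        (fun y _ hyne => ?_) (fun h => absurd (Finset.mem_univ _) h)) ?_
    · rw [if_neg]
      rintro ⟨⟨hcanon, -⟩, -, hxy⟩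
      refine hyne (funext fun s => funext fun j => ?_)
      by_cases hs : (s : ℕ) < t
      · rw [if_pos hs, ← hxy s hs]
      · rw [if_neg hs]
        exact hcanon s j hs
    · refine if_congr ⟨?_, ?_⟩ rfl rfl
      · rintro ⟨⟨-, hWy⟩, hCa, -⟩
        exact ⟨hCa, (hW x').mpr hWy⟩
      · rintro ⟨hCa, hWx⟩
        refine ⟨⟨fun s j hs => if_neg hs, (hW x').mp hWx⟩, hCa, fun s hs => ?_⟩
        funext j
        exact (if_pos hs).symm
  symm
  calc (∑ y : Fin T → ∀ j, X j,
        if (∀ (s : Fin T) (j : Fin N), ¬ ((s : ℕ) < t) → y s j = d j) ∧ W y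
          then xaMarg N T X A Q1 Qk g t y a else 0)
      = ∑ y : Fin T → ∀ j, X j, ∑ x' : Fin T → ∀ j, X j, ∑ a' : Fin T → ∀ j, A j,
          if ((∀ (s : Fin T) (j : Fin N), ¬ ((s : ℕ) < t) → y s j = d j) ∧ W y) ∧
              ((∀ s : Fin T, (s : ℕ) + 1 < t → a' s = a s) ∧
                (∀ s : Fin T, (s : ℕ) < t → x' s = y s))
            then trajP N T X A Q1 Qk g x' a' else 0 :=
        Finset.sum_congr rfl fun y _ => hy y
    _ = _ := by
        refine Eq.trans Finset.sum_comm ?_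
        refine Eq.trans (Finset.sum_congr rfl fun x' _ => Finset.sum_comm) ?_
        exact Finset.sum_congr rfl fun x' _ =>
          Finset.sum_congr rfl fun a' _ => hinner x' a'

lemma aMarg_eq (g : Strat N T X A) (hK : StochKer N T X A Q1 Qk)
    (hg : Stochastic N T X A g) (hc : Causal N T X A g)
    (t : ℕ) (ht : t ≤ T + 1) (d : ∀ j, X j) (a : Fin T → ∀ i, A i) :
    aMarg N T X A Q1 Qk g t a = ∏ j, sig N T X A Q1 Qk j (g j) t a (d j) := by
  have h1 := group N T X A Q1 Qk g t d (fun _ => True) (fun _ => Iff.rfl) a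
  refine Eq.trans ?_ (Eq.trans h1 ?_)
  · unfold aMarg
    refine Finset.sum_congr rfl fun x' _ => Finset.sum_congr rfl fun a' _ => ?_
    by_cases hcond : (∀ s : Fin T, (s : ℕ) + 1 < t → a' s = a s)
    · rw [if_pos hcond, if_pos (⟨hcond, trivial⟩ :
        (∀ s : Fin T, (s : ℕ) + 1 < t → a' s = a s) ∧ True)]
    · rw [if_neg hcond, if_neg (fun h => hcond h.1)]
  · refine Eq.trans (Finset.sum_congr rfl fun y _ => ?_)
      (Eq.trans (factor_lemma (fun j yj => ∀ s : Fin T, ¬ ((s : ℕ) < t) → yj s = d j)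
        (fun j yj => pii N T X A Q1 Qk j (g j) t yj a))
        (Finset.prod_congr rfl fun j _ => by
          unfold sig
          refine Finset.sum_congr rfl fun yj _ => ?_
          by_cases hcan : ∀ s : Fin T, ¬ ((s : ℕ) < t) → yj s = d j
          · rw [if_pos hcan, if_pos hcan]
          · rw [if_neg hcan, if_neg hcan]))
    by_cases hcond : (∀ (s : Fin T) (j : Fin N), ¬ ((s : ℕ) < t) → y s j = d j)
    · rw [if_pos (⟨hcond, trivial⟩ :
          (∀ (s : Fin T) (j : Fin N), ¬ ((s : ℕ) < t) → y s j = d j) ∧ True),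
        if_pos (fun j s hs => hcond s j hs),
        xaMarg_eq N T X A Q1 Qk g hK hg hc (T + 1 - t) t (by omega) y a]
    · rw [if_neg (fun h => hcond h.1), if_neg (fun h => hcond fun s j hs => h j s hs)]

lemma xiMarg_eq (g : Strat N T X A) (hK : StochKer N T X A Q1 Qk)
    (hg : Stochastic N T X A g) (hc : Causal N T X A g)
    (t : ℕ) (ht : t ≤ T + 1) (d : ∀ j, X j) (i : Fin N)
    (xi : Fin T → X i) (a : Fin T → ∀ i, A i) :
    xiMarg N T X A Q1 Qk g i t xi a
      = ∏ j, (if j = i then pii N T X A Q1 Qk i (g i) t xi a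
               else sig N T X A Q1 Qk j (g j) t a (d j)) := by
  have h1 := group N T X A Q1 Qk g t d
    (fun x' => ∀ s : Fin T, (s : ℕ) < t → x' s i = xi s)
    (fun x' => ⟨fun h s hs => by simpa only [if_pos hs] using h s hs,
                fun h s hs => by simpa only [if_pos hs] using h s hs⟩) a
  refine Eq.trans ?_ (Eq.trans h1 ?_)
  · unfold xiMarg
    refine Finset.sum_congr rfl fun x' _ => Finset.sum_congr rfl fun a' _ => ?_
    by_cases hcond : (∀ s : Fin T, (s : ℕ) + 1 < t → a' s = a s) ∧
        (∀ s : Fin T, (s : ℕ) < t → x' s i = xi s)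
    · rw [if_pos hcond, if_pos hcond]
    · rw [if_neg hcond, if_neg hcond]
  · refine Eq.trans (Finset.sum_congr rfl fun y _ => ?_)
      (Eq.trans (factor_lemma
        (fun j yj => (∀ h : j = i, ∀ s : Fin T, (s : ℕ) < t → HEq (yj s) (xi s)) ∧
          (∀ s : Fin T, ¬ ((s : ℕ) < t) → yj s = d j))
        (fun j yj => pii N T X A Q1 Qk j (g j) t yj a)) ?_)
    · by_cases hcond : (∀ (s : Fin T) (j : Fin N), ¬ ((s : ℕ) < t) → y s j = d j) ∧
          (∀ s : Fin T, (s : ℕ) < t → y s i = xi s)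
      · rw [if_pos hcond,
          if_pos (show ∀ j, (∀ h : j = i, ∀ s : Fin T, (s : ℕ) < t → HEq (y s j) (xi s)) ∧
              (∀ s : Fin T, ¬ ((s : ℕ) < t) → y s j = d j) from fun j =>
            ⟨fun hji s hs => by subst hji; exact heq_of_eq (hcond.2 s hs),
             fun s hs => hcond.1 s j hs⟩),
          xaMarg_eq N T X A Q1 Qk g hK hg hc (T + 1 - t) t (by omega) y a]
      · rw [if_neg hcond, if_neg (fun h => hcond
          ⟨fun s j hs => (h j).2 s hs, fun s hs => eq_of_heq ((h i).1 rfl s hs)⟩)]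
    · refine Finset.prod_congr rfl fun j _ => ?_
      by_cases hj : j = i
      · subst hj
        rw [if_pos rfl]
        refine Eq.trans (Finset.sum_eq_single
            (fun (s : Fin T) => if (s : ℕ) < t then xi s else d j)
            (fun yj _ hne => ?_) (fun h => absurd (Finset.mem_univ _) h)) ?_
        · rw [if_neg]
          rintro ⟨hm, hcan⟩
          refine hne (funext fun s => ?_)
          by_cases hs : (s : ℕ) < t
          · rw [if_pos hs]
            exact eq_of_heq (hm rfl s hs)
          · rw [if_neg hs]
            exact hcan s hs
        · rw [if_pos (⟨fun _ s hs => heq_of_eq (if_pos hs), fun s hs => if_neg hs⟩ :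
            (∀ h : j = j, ∀ s : Fin T, (s : ℕ) < t →
              HEq (if (s : ℕ) < t then xi s else d j) (xi s)) ∧
            (∀ s : Fin T, ¬ ((s : ℕ) < t) →
              (if (s : ℕ) < t then xi s else d j) = d j))]
          exact pii_congr N T X A Q1 Qk j (g j) (hc j) t (fun s _ => rfl)
            (fun s hs => if_pos hs)
      · rw [if_neg hj]
        unfold sig
        refine Finset.sum_congr rfl fun yj _ => ?_
        by_cases hcan : ∀ s : Fin T, ¬ ((s : ℕ) < t) → yj s = d j
        · rw [if_pos (⟨fun hji => absurd hji hj, hcan⟩ :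
            (∀ h : j = i, ∀ s : Fin T, (s : ℕ) < t → HEq (yj s) (xi s)) ∧
            (∀ s : Fin T, ¬ ((s : ℕ) < t) → yj s = d j)), if_pos hcan]
        · rw [if_neg (fun h => hcan h.2), if_neg hcan]
/-- the posterior of the joint type history given the public action history
factorizes over players, and each factor depends only on the corresponding player's own
strategy. -/
theorem conditional_independence_of_types
    (g : Strat N T X A)
    (hK : StochKer N T X A Q1 Qk) (hg : Stochastic N T X A g) (hc : Causal N T X A g)
    (t : ℕ) (ht : t ≤ T)
    (x : Fin T → ∀ i, X i) (a : Fin T → ∀ i, A i)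
    (hpos : 0 < aMarg N T X A Q1 Qk g t a) :
    condJoint N T X A Q1 Qk g t x a
      = (∏ i, condI N T X A Q1 Qk g i t (fun s => x s i) a) ∧
    (∀ i (g' : Strat N T X A), Stochastic N T X A g' → Causal N T X A g' →
      g' i = g i → 0 < aMarg N T X A Q1 Qk g' t a →
      condI N T X A Q1 Qk g' i t (fun s => x s i) a
        = condI N T X A Q1 Qk g i t (fun s => x s i) a) := by
  have hne : ∀ j : Fin N, Nonempty (X j) := by
    intro j
    by_contra h
    rw [not_nonempty_iff] at h
    have h2 := (hK.1 j).2
    rw [Finset.univ_eq_empty, Finset.sum_empty] at h2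
    exact one_ne_zero h2.symm
  have d : ∀ j, X j := fun j => Classical.choice (hne j)
  have ht' : t ≤ T + 1 := by omega
  have key : ∀ (g' : Strat N T X A), Stochastic N T X A g' → Causal N T X A g' →
      0 < aMarg N T X A Q1 Qk g' t a → ∀ i,
      condI N T X A Q1 Qk g' i t (fun s => x s i) a
        = pii N T X A Q1 Qk i (g' i) t (fun s => x s i) a
          / sig N T X A Q1 Qk i (g' i) t a (d i) := by
    intro g' hg' hc' hpos' i
    have hA' := aMarg_eq N T X A Q1 Qk g' hK hg' hc' t ht' d a
    have hXi := xiMarg_eq N T X A Q1 Qk g' hK hg' hc' t ht' d i (fun s => x s i) a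
    have hσ' : ∀ j, sig N T X A Q1 Qk j (g' j) t a (d j) ≠ 0 := fun j =>
      Finset.prod_ne_zero_iff.mp (by rw [← hA']; exact ne_of_gt hpos') j (Finset.mem_univ j)
    rw [condI, hXi, hA', ← Finset.prod_div_distrib]
    have hperj : ∀ j ∈ Finset.univ,
        (if j = i then pii N T X A Q1 Qk i (g' i) t (fun s => x s i) a
          else sig N T X A Q1 Qk j (g' j) t a (d j)) / sig N T X A Q1 Qk j (g' j) t a (d j)
        = (if j = i then pii N T X A Q1 Qk i (g' i) t (fun s => x s i) a
            / sig N T X A Q1 Qk i (g' i) t a (d i) else 1) := by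
      intro j _
      by_cases hj : j = i
      · subst hj
        rw [if_pos rfl, if_pos rfl]
      · rw [if_neg hj, if_neg hj, div_self (hσ' j)]
    rw [Finset.prod_congr rfl hperj,
      Finset.prod_ite_eq' Finset.univ i
        (fun _ => pii N T X A Q1 Qk i (g' i) t (fun s => x s i) a
          / sig N T X A Q1 Qk i (g' i) t a (d i)),
      if_pos (Finset.mem_univ i)]
  constructor
  · have hA := aMarg_eq N T X A Q1 Qk g hK hg hc t ht' d a
    have hXA := xaMarg_eq N T X A Q1 Qk g hK hg hc (T + 1 - t) t (by omega) x a
    rw [condJoint, hXA, hA, ← Finset.prod_div_distrib]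
    refine Finset.prod_congr rfl fun i _ => ?_
    exact (key g hg hc hpos i).symm
  · intro i g' hg' hc' hgi hpos'
    rw [key g' hg' hc' hpos' i, key g hg hc hpos i, hgi]

end DynGame
end
end

section
/- Fix a strategy profile g^{-i} for players other than i in the dynamic game with conditionally independent Markovian types. Then the process with state (a_{1:t-1}, x_t^i) and control a_t^i is a controlled Markov process for player i: the conditional distribution P^g(a_{1:t}, x_{t+1}^i | a_{1:t-1}, x_{1:t}^i, a_t^i) depends only on (a_{1:t-1}, x_t^i, a_t^i) and on g^{-i}, and not on player i's own strategy g^i or on its earlier types x_{1:t-1}^i. -/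
open scoped Classical BigOperators

noncomputable section

namespace DynGame

variable (N T : ℕ) (X A : Fin N → Type)
  [∀ i, Fintype (X i)] [∀ i, Fintype (A i)]

variable (Q1 : ∀ i, X i → ℝ) (Qk : ∀ i, Fin T → X i → (∀ j, A j) → X i → ℝ)

/-- Probability of the event `(a_{1:t}, x_{t+1}^i)` together with the conditioning data
`(a_{1:t-1}, x_{1:t}^i, a_t^i)`; here `τ` is the 0-based index of the current period `t`,
so `x_{1:t}^i` are the coordinates `s ≤ τ` of `xi`, `x_{t+1}^i` is `xi (τ+1)`. -/
def num1 (g : Strat N T X A) (i : Fin N) (τ : Fin T) (h1 : (τ : ℕ) + 1 < T)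
    (a : Fin T → ∀ j, A j) (xi : Fin T → X i) : ℝ :=
  ∑ x' : Fin T → ∀ j, X j, ∑ a' : Fin T → ∀ j, A j,
    if (∀ s : Fin T, (s : ℕ) < (τ : ℕ) → a' s = a s) ∧ a' τ = a τ ∧
       (∀ s : Fin T, (s : ℕ) ≤ (τ : ℕ) + 1 → x' s i = xi s)
    then trajP N T X A Q1 Qk g x' a' else 0

/-- Probability of the conditioning data `(a_{1:t-1}, x_{1:t}^i, a_t^i)`. -/
def den1 (g : Strat N T X A) (i : Fin N) (τ : Fin T)
    (a : Fin T → ∀ j, A j) (xi : Fin T → X i) : ℝ :=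
  ∑ x' : Fin T → ∀ j, X j, ∑ a' : Fin T → ∀ j, A j,
    if (∀ s : Fin T, (s : ℕ) < (τ : ℕ) → a' s = a s) ∧ a' τ i = a τ i ∧
       (∀ s : Fin T, (s : ℕ) ≤ (τ : ℕ) → x' s i = xi s)
    then trajP N T X A Q1 Qk g x' a' else 0

/-- The conditional `P^g(a_{1:t}, x_{t+1}^i | a_{1:t-1}, x_{1:t}^i, a_t^i)`. -/
def cond1 (g : Strat N T X A) (i : Fin N) (τ : Fin T) (h1 : (τ : ℕ) + 1 < T)
    (a : Fin T → ∀ j, A j) (xi : Fin T → X i) : ℝ :=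
  num1 N T X A Q1 Qk g i τ h1 a xi / den1 N T X A Q1 Qk g i τ a xi


-- ===== auxiliary machinery =====


/-- Summing out one coordinate against a normalized kernel that does not depend on
that coordinate. -/
lemma sum_kernel_coord {ι : Type} [Fintype ι] [DecidableEq ι] {β : ι → Type}
    [∀ i, Fintype (β i)] [∀ i, Nonempty (β i)] (i₀ : ι)
    (k : (∀ j, β j) → β i₀ → ℝ)
    (hk : ∀ v v' : ∀ j, β j, (∀ j, j ≠ i₀ → v j = v' j) → ∀ b, k v b = k v' b)
    (hn : ∀ v, ∑ b, k v b = 1)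
    (φ : (∀ j, β j) → ℝ)
    (hφ : ∀ v v' : ∀ j, β j, (∀ j, j ≠ i₀ → v j = v' j) → φ v = φ v') :
    ∑ v : ∀ j, β j, φ v * k v (v i₀)
      = ((Fintype.card (β i₀) : ℝ))⁻¹ * ∑ v : ∀ j, β j, φ v := by
  classical
  set e := Equiv.piSplitAt i₀ β with he
  have hsum : ∀ f : (∀ j, β j) → ℝ, (∑ v, f v) = ∑ y : β i₀ × (∀ j : {j // j ≠ i₀}, β j), f (e.symm y) := by
    intro f
    exact (Equiv.sum_comp e.symm f).symm
  have hagree : ∀ (b b' : β i₀) (w : ∀ j : {j // j ≠ i₀}, β j),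
      ∀ j, j ≠ i₀ → e.symm (b, w) j = e.symm (b', w) j := by
    intro b b' w j hj
    simp [he, Equiv.piSplitAt, hj]
  have hval : ∀ (b : β i₀) (w : ∀ j : {j // j ≠ i₀}, β j), e.symm (b, w) i₀ = b := by
    intro b w
    simp [he, Equiv.piSplitAt]
  obtain ⟨b₀⟩ : Nonempty (β i₀) := inferInstance
  have key : ∀ (b : β i₀) (w : ∀ j : {j // j ≠ i₀}, β j),
      φ (e.symm (b, w)) = φ (e.symm (b₀, w)) := fun b w => hφ _ _ (hagree b b₀ w)
  have keyk : ∀ (b : β i₀) (w : ∀ j : {j // j ≠ i₀}, β j) c,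
      k (e.symm (b, w)) c = k (e.symm (b₀, w)) c := fun b w => hk _ _ (hagree b b₀ w)
  rw [hsum (fun v => φ v * k v (v i₀)), hsum φ, Fintype.sum_prod_type, Fintype.sum_prod_type]
  have L : ∀ w : ∀ j : {j // j ≠ i₀}, β j,
      (∑ b : β i₀, φ (e.symm (b, w)) * k (e.symm (b, w)) (e.symm (b, w) i₀))
        = φ (e.symm (b₀, w)) := by
    intro w
    have : ∀ b : β i₀, φ (e.symm (b, w)) * k (e.symm (b, w)) (e.symm (b, w) i₀)
        = φ (e.symm (b₀, w)) * k (e.symm (b₀, w)) b := by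
      intro b
      rw [key b w, hval b w, keyk b w b]
    rw [Finset.sum_congr rfl fun b _ => this b, ← Finset.mul_sum, hn, mul_one]
  rw [Finset.sum_comm]
  have R : (∑ b : β i₀, ∑ w : ∀ j : {j // j ≠ i₀}, β j, φ (e.symm (b, w)))
      = (Fintype.card (β i₀) : ℝ) * ∑ w : ∀ j : {j // j ≠ i₀}, β j, φ (e.symm (b₀, w)) := by
    rw [Finset.sum_congr rfl fun b _ => Finset.sum_congr rfl fun w _ => key b w]
    simp [Finset.sum_const, mul_comm]
  rw [Finset.sum_congr rfl fun w _ => L w, R, ← mul_assoc,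
    inv_mul_cancel₀ (by exact_mod_cast Fintype.card_ne_zero), one_mul]





/-- Telescoping: summing a function times a product of normalized kernels over a set `E`
of coordinates, where each kernel depends only on coordinates of smaller rank and the
function does not depend on coordinates in `E`. -/
lemma telescope {ι : Type} [Fintype ι] [DecidableEq ι] {β : ι → Type}
    [∀ i, Fintype (β i)] [∀ i, Nonempty (β i)] (r : ι → ℕ)
    (h : ∀ i, (∀ j, β j) → β i → ℝ) :
    ∀ E : Finset ι,
      (∀ i ∈ E, ∀ v v' : ∀ j, β j, (∀ j, r j < r i → v j = v' j) → ∀ b, h i v b = h i v' b) →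
      (∀ i ∈ E, ∀ v, ∑ b, h i v b = 1) →
      ∀ F : (∀ j, β j) → ℝ,
      (∀ v v' : ∀ j, β j, (∀ j, j ∉ E → v j = v' j) → F v = F v') →
      (∑ v : ∀ j, β j, F v * ∏ i ∈ E, h i v (v i))
        = (∏ i ∈ E, ((Fintype.card (β i) : ℝ))⁻¹) * ∑ v : ∀ j, β j, F v := by
  classical
  intro E
  induction E using Finset.strongInduction with
  | _ E IH =>
    intro hdep hnorm F hF
    rcases E.eq_empty_or_nonempty with rfl | hne
    · simp
    obtain ⟨i₀, hi₀, hmax⟩ := E.exists_max_image r hne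
    have herase : E.erase i₀ ⊂ E := Finset.erase_ssubset hi₀
    set E' := E.erase i₀ with hE'
    have hprod : ∀ v : ∀ j, β j, (∏ i ∈ E, h i v (v i))
        = h i₀ v (v i₀) * ∏ i ∈ E', h i v (v i) := by
      intro v; exact (Finset.mul_prod_erase E (fun i => h i v (v i)) hi₀).symm
    have step1 : (∑ v : ∀ j, β j, F v * ∏ i ∈ E, h i v (v i))
        = ((Fintype.card (β i₀) : ℝ))⁻¹ * ∑ v : ∀ j, β j, F v * ∏ i ∈ E', h i v (v i) := by
      have := sum_kernel_coord i₀ (h i₀)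
        (fun v v' hvv' => hdep i₀ hi₀ v v' (fun j hj => hvv' j (fun hji => by
          subst hji; exact lt_irrefl _ hj)))
        (hnorm i₀ hi₀)
        (fun v => F v * ∏ i ∈ E', h i v (v i))
        (by
          intro v v' hvv'
          have hFv : F v = F v' := hF v v' (fun j hj => hvv' j (fun hji => hj (hji ▸ hi₀)))
          have : ∀ i ∈ E', h i v (v i) = h i v' (v' i) := by
            intro i hi
            have hiE : i ∈ E := Finset.mem_of_mem_erase hi
            have hii₀ : i ≠ i₀ := Finset.ne_of_mem_erase hi
            have h1 : h i v (v i) = h i v' (v i) :=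
              hdep i hiE v v' (fun j hj => hvv' j (fun hji => by
                subst hji
                exact absurd (lt_of_lt_of_le hj (hmax i hiE)) (lt_irrefl _))) (v i)
            rw [h1, hvv' i hii₀]
          rw [hFv, Finset.prod_congr rfl this])
      rw [← this]
      exact Finset.sum_congr rfl fun v _ => by rw [hprod v]; ring
    rw [step1, IH E' herase
        (fun i hi => hdep i (Finset.mem_of_mem_erase hi))
        (fun i hi => hnorm i (Finset.mem_of_mem_erase hi))
        F (fun v v' hvv' => hF v v' (fun j hj => hvv' j (fun hj' => hj (Finset.mem_of_mem_erase hj')))),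
      ← mul_assoc, hE']
    rw [← Finset.mul_prod_erase E (fun i => ((Fintype.card (β i) : ℝ))⁻¹) hi₀]




abbrev Idx := Fin T × (Fin N ⊕ Fin N)

def bet : Idx N T → Type := fun p => Sum.elim X A p.2

instance (p : Idx N T) : Fintype (bet N T X A p) := by
  rcases p with ⟨t, j | j⟩
  · exact inferInstanceAs (Fintype (X j))
  · exact inferInstanceAs (Fintype (A j))

def rk : Idx N T → ℕ := fun p => 2 * (p.1 : ℕ) + Sum.elim (fun _ => 0) (fun _ => 1) p.2

def xOf (v : ∀ p, bet N T X A p) : Fin T → ∀ j, X j := fun t j => v (t, Sum.inl j)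

def aOf (v : ∀ p, bet N T X A p) : Fin T → ∀ j, A j := fun t j => v (t, Sum.inr j)

def eXA : ((Fin T → ∀ j, X j) × (Fin T → ∀ j, A j)) ≃ (∀ p : Idx N T, bet N T X A p) where
  toFun xa p := match p with
    | (t, Sum.inl j) => xa.1 t j
    | (t, Sum.inr j) => xa.2 t j
  invFun v := (xOf N T X A v, aOf N T X A v)
  left_inv := by rintro ⟨x, a⟩; rfl
  right_inv := by intro v; funext p; rcases p with ⟨t, j | j⟩ <;> rfl

def Hker (g : Strat N T X A) : ∀ p : Idx N T, (∀ q, bet N T X A q) → bet N T X A p → ℝ :=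
  fun p => match p with
  | (t, Sum.inl j) => fun v b =>
      if h : 0 < (t : ℕ) then
        Qk j t (v (⟨(t : ℕ) - 1, lt_of_le_of_lt (Nat.sub_le _ _) t.isLt⟩, Sum.inl j))
          (fun j' => v (⟨(t : ℕ) - 1, lt_of_le_of_lt (Nat.sub_le _ _) t.isLt⟩, Sum.inr j')) b
      else Q1 j b
  | (t, Sum.inr j) => fun v b => g j t (aOf N T X A v) (fun s => v (s, Sum.inl j)) b


lemma Hker_inl (g : Strat N T X A) (t : Fin T) (j : Fin N) (v : ∀ q, bet N T X A q)
    (b : bet N T X A (t, Sum.inl j)) :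
    Hker N T X A Q1 Qk g (t, Sum.inl j) v b
      = if h : 0 < (t : ℕ) then
          Qk j t (v (⟨(t : ℕ) - 1, lt_of_le_of_lt (Nat.sub_le _ _) t.isLt⟩, Sum.inl j))
            (fun j' => v (⟨(t : ℕ) - 1, lt_of_le_of_lt (Nat.sub_le _ _) t.isLt⟩, Sum.inr j')) b
        else Q1 j b := rfl

lemma Hker_inr (g : Strat N T X A) (t : Fin T) (j : Fin N) (v : ∀ q, bet N T X A q)
    (b : bet N T X A (t, Sum.inr j)) :
    Hker N T X A Q1 Qk g (t, Sum.inr j) v b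
      = g j t (aOf N T X A v) (fun s => v (s, Sum.inl j)) b := rfl

lemma trajP_repr (g : Strat N T X A) (hT : 0 < T) (v : ∀ p, bet N T X A p) :
    trajP N T X A Q1 Qk g (xOf N T X A v) (aOf N T X A v)
      = ∏ p : Idx N T, Hker N T X A Q1 Qk g p v (v p) := by
  classical
  set x := xOf N T X A v with hxdef
  set a := aOf N T X A v with hadef
  have RHSeq : (∏ p : Idx N T, Hker N T X A Q1 Qk g p v (v p))
      = (∏ t : Fin T, ∏ j, Hker N T X A Q1 Qk g (t, Sum.inl j) v (v (t, Sum.inl j)))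
        * (∏ t : Fin T, ∏ j, Hker N T X A Q1 Qk g (t, Sum.inr j) v (v (t, Sum.inr j))) := by
    rw [Fintype.prod_prod_type, ← Finset.prod_mul_distrib]
    exact Finset.prod_congr rfl fun t _ =>
      Fintype.prod_sum_type (fun c => Hker N T X A Q1 Qk g (t, c) v (v (t, c)))
  have hxprod : (∏ t : Fin T, ∏ j, Hker N T X A Q1 Qk g (t, Sum.inl j) v (v (t, Sum.inl j)))
      = (∏ j, Q1 j (x ⟨0, hT⟩ j)) *
        ∏ t : Fin T, ∏ j, (if h : (t : ℕ) + 1 < T then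
          Qk j ⟨(t : ℕ) + 1, h⟩ (x t j) (a t) (x ⟨(t : ℕ) + 1, h⟩ j) else 1) := by
    set Px : ℕ → ℝ := fun m => if h : m < T then
        ∏ j, Hker N T X A Q1 Qk g (⟨m, h⟩, Sum.inl j) v (v (⟨m, h⟩, Sum.inl j)) else 1 with hPx
    set Qx : ℕ → ℝ := fun m => if h : m < T then
        ∏ j, (if h2 : m + 1 < T then
          Qk j ⟨m + 1, h2⟩ (x ⟨m, h⟩ j) (a ⟨m, h⟩) (x ⟨m + 1, h2⟩ j) else 1) else 1 with hQx
    have hL : (∏ t : Fin T, ∏ j, Hker N T X A Q1 Qk g (t, Sum.inl j) v (v (t, Sum.inl j)))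
        = ∏ m ∈ Finset.range T, Px m := by
      rw [← Fin.prod_univ_eq_prod_range]
      exact Finset.prod_congr rfl fun t _ => by simp [hPx, t.isLt]
    have hR : (∏ t : Fin T, ∏ j, (if h : (t : ℕ) + 1 < T then
          Qk j ⟨(t : ℕ) + 1, h⟩ (x t j) (a t) (x ⟨(t : ℕ) + 1, h⟩ j) else 1))
        = ∏ m ∈ Finset.range T, Qx m := by
      rw [← Fin.prod_univ_eq_prod_range]
      exact Finset.prod_congr rfl fun t _ => by simp [hQx, t.isLt]
    rw [hL, hR]
    obtain ⟨n, rfl⟩ : ∃ n, T = n + 1 := ⟨T - 1, by omega⟩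
    rw [Finset.prod_range_succ', Finset.prod_range_succ]
    have hQn : Qx n = 1 := by
      rw [hQx]
      simp
    have hP0 : Px 0 = ∏ j, Q1 j (x ⟨0, hT⟩ j) := by
      rw [hPx]
      simp only [hT, dif_pos, Nat.lt_irrefl]
      refine Finset.prod_congr rfl fun j _ => ?_
      rw [Hker_inl]
      rw [dif_neg (by simp)]
      rfl
    have hmid : ∀ m ∈ Finset.range n, Px (m + 1) = Qx m := by
      intro m hm
      have hmn : m < n := Finset.mem_range.1 hm
      have h1 : m + 1 < n + 1 := by omega
      have h0 : m < n + 1 := by omega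
      simp only [hPx, hQx]
      rw [dif_pos h1, dif_pos h0]
      refine Finset.prod_congr rfl fun j _ => ?_
      rw [Hker_inl, dif_pos (by simp : 0 < ((⟨m+1, h1⟩ : Fin (n+1)) : ℕ)), dif_pos h1]
      have hfin : (⟨(((⟨m+1, h1⟩ : Fin (n+1)) : ℕ)) - 1,
          lt_of_le_of_lt (Nat.sub_le _ _) (⟨m+1, h1⟩ : Fin (n+1)).isLt⟩ : Fin (n+1)) = ⟨m, h0⟩ := by
        ext; simp
      rw [hfin]
      rfl
    rw [Finset.prod_congr rfl hmid, hQn, hP0, mul_one, mul_comm]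
  have haprod : (∏ t : Fin T, ∏ j, Hker N T X A Q1 Qk g (t, Sum.inr j) v (v (t, Sum.inr j)))
      = ∏ t : Fin T, ∏ j, g j t a (fun s => x s j) (a t j) := rfl
  rw [RHSeq, hxprod, haprod, trajP, dif_pos hT]
  rw [Finset.prod_mul_distrib]
  ring


lemma Hker_inl_dep (g : Strat N T X A) (t : Fin T) (j : Fin N) (v v' : ∀ q, bet N T X A q)
    (hx : ∀ s : Fin T, (s : ℕ) < (t : ℕ) → v (s, Sum.inl j) = v' (s, Sum.inl j))
    (ha : ∀ (s : Fin T) (j' : Fin N), (s : ℕ) < (t : ℕ) → v (s, Sum.inr j') = v' (s, Sum.inr j'))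
    (b : bet N T X A (t, Sum.inl j)) :
    Hker N T X A Q1 Qk g (t, Sum.inl j) v b = Hker N T X A Q1 Qk g (t, Sum.inl j) v' b := by
  rw [Hker_inl, Hker_inl]
  by_cases h : 0 < (t : ℕ)
  · rw [dif_pos h, dif_pos h]
    have h1 : ((⟨(t : ℕ) - 1, lt_of_le_of_lt (Nat.sub_le _ _) t.isLt⟩ : Fin T) : ℕ) < (t : ℕ) := by
      simp; omega
    rw [hx _ h1]
    congr 1
    funext j'
    exact ha _ j' h1
  · rw [dif_neg h, dif_neg h]

lemma Hker_inr_dep (g : Strat N T X A) (hgc : Causal N T X A g) (t : Fin T) (j : Fin N)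
    (v v' : ∀ q, bet N T X A q)
    (ha : ∀ (s : Fin T) (j' : Fin N), (s : ℕ) < (t : ℕ) → v (s, Sum.inr j') = v' (s, Sum.inr j'))
    (hx : ∀ s : Fin T, (s : ℕ) ≤ (t : ℕ) → v (s, Sum.inl j) = v' (s, Sum.inl j))
    (b : bet N T X A (t, Sum.inr j)) :
    Hker N T X A Q1 Qk g (t, Sum.inr j) v b = Hker N T X A Q1 Qk g (t, Sum.inr j) v' b := by
  rw [Hker_inr, Hker_inr]
  have := hgc j t (aOf N T X A v) (aOf N T X A v') (fun s => v (s, Sum.inl j))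
    (fun s => v' (s, Sum.inl j))
    (fun s hs => funext fun j' => ha s j' hs) (fun s hs => hx s hs)
  rw [this]

lemma Hker_norm (g : Strat N T X A) (hK : StochKer N T X A Q1 Qk)
    (hg : Stochastic N T X A g) (p : Idx N T) (v : ∀ q, bet N T X A q) :
    ∑ b, Hker N T X A Q1 Qk g p v b = 1 := by
  rcases p with ⟨t, j | j⟩
  · by_cases h : 0 < (t : ℕ)
    · simp only [Hker_inl, dif_pos h]
      exact (hK.2 j t _ _).2
    · simp only [Hker_inl, dif_neg h]
      exact (hK.1 j).2
  · simp only [Hker_inr]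
    exact (hg j t _ _).2

lemma Hker_nonneg (g : Strat N T X A) (hK : StochKer N T X A Q1 Qk)
    (hg : Stochastic N T X A g) (p : Idx N T) (v : ∀ q, bet N T X A q) (b : bet N T X A p) :
    0 ≤ Hker N T X A Q1 Qk g p v b := by
  rcases p with ⟨t, j | j⟩
  · by_cases h : 0 < (t : ℕ)
    · rw [Hker_inl, dif_pos h]
      exact (hK.2 j t _ _).1 b
    · rw [Hker_inl, dif_neg h]
      exact (hK.1 j).1 b
  · rw [Hker_inr]
    exact (hg j t _ _).1 b


def ESetDen (i : Fin N) (τ : Fin T) : Finset (Idx N T) :=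
  Finset.univ.filter (fun p => (τ : ℕ) < (p.1 : ℕ) ∨
    ((p.1 : ℕ) = (τ : ℕ) ∧ p.2 ≠ Sum.inl i ∧ p.2 ≠ Sum.inr i))

def PiSetDen (i : Fin N) (τ : Fin T) : Finset (Idx N T) :=
  Finset.univ.filter (fun p => (p.1 : ℕ) ≤ (τ : ℕ) ∧ (p.2 = Sum.inl i ∨ p.2 = Sum.inr i))

def RestDen (i : Fin N) (τ : Fin T) : Finset (Idx N T) :=
  Finset.univ.filter (fun p => (p.1 : ℕ) < (τ : ℕ) ∧ p.2 ≠ Sum.inl i ∧ p.2 ≠ Sum.inr i)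

def ESetNum (i : Fin N) (τ : Fin T) : Finset (Idx N T) :=
  Finset.univ.filter (fun p => (τ : ℕ) + 1 ≤ (p.1 : ℕ) ∧
    ¬((p.1 : ℕ) = (τ : ℕ) + 1 ∧ p.2 = Sum.inl i))

def PiSetNum (i : Fin N) (τ : Fin T) : Finset (Idx N T) :=
  Finset.univ.filter (fun p => ((p.1 : ℕ) ≤ (τ : ℕ) ∧ (p.2 = Sum.inl i ∨ p.2 = Sum.inr i)) ∨
    ((p.1 : ℕ) = (τ : ℕ) + 1 ∧ p.2 = Sum.inl i))

def RestNum (i : Fin N) (τ : Fin T) : Finset (Idx N T) :=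
  Finset.univ.filter (fun p => (p.1 : ℕ) ≤ (τ : ℕ) ∧ p.2 ≠ Sum.inl i ∧ p.2 ≠ Sum.inr i)

def E2Set (i : Fin N) (m : ℕ) : Finset (Idx N T) :=
  Finset.univ.filter (fun p => (p.1 : ℕ) ≤ m ∧ p.2 = Sum.inl i)

/-- The value of player `i`'s own factor at index `p`, expressed through the data
`(a, xi)` only. -/
def Hc (g : Strat N T X A) (i : Fin N) (a : Fin T → ∀ j, A j) (xi : Fin T → X i) :
    Idx N T → ℝ := fun p =>
  match p with
  | (t, Sum.inl _) =>
      if h : 0 < (t : ℕ) then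
        Qk i t (xi ⟨(t : ℕ) - 1, lt_of_le_of_lt (Nat.sub_le _ _) t.isLt⟩)
          (a ⟨(t : ℕ) - 1, lt_of_le_of_lt (Nat.sub_le _ _) t.isLt⟩) (xi t)
      else Q1 i (xi t)
  | (t, Sum.inr _) => g i t a xi (a t i)

lemma Hc_inl (g : Strat N T X A) (i : Fin N) (a : Fin T → ∀ j, A j) (xi : Fin T → X i)
    (t : Fin T) (j : Fin N) :
    Hc N T X A Q1 Qk g i a xi (t, Sum.inl j)
      = if h : 0 < (t : ℕ) then
          Qk i t (xi ⟨(t : ℕ) - 1, lt_of_le_of_lt (Nat.sub_le _ _) t.isLt⟩)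
            (a ⟨(t : ℕ) - 1, lt_of_le_of_lt (Nat.sub_le _ _) t.isLt⟩) (xi t)
        else Q1 i (xi t) := rfl

lemma Hc_inr (g : Strat N T X A) (i : Fin N) (a : Fin T → ∀ j, A j) (xi : Fin T → X i)
    (t : Fin T) (j : Fin N) :
    Hc N T X A Q1 Qk g i a xi (t, Sum.inr j) = g i t a xi (a t i) := rfl

def cardInv (S : Finset (Idx N T)) : ℝ :=
  ∏ p ∈ S, ((Fintype.card (bet N T X A p) : ℝ))⁻¹

def CondADen (i : Fin N) (τ : Fin T) (a : Fin T → ∀ j, A j)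
    (v : ∀ p, bet N T X A p) : Prop :=
  (∀ s : Fin T, (s : ℕ) < (τ : ℕ) → aOf N T X A v s = a s) ∧ aOf N T X A v τ i = a τ i

def CondANum (τ : Fin T) (a : Fin T → ∀ j, A j) (v : ∀ p, bet N T X A p) : Prop :=
  (∀ s : Fin T, (s : ℕ) < (τ : ℕ) → aOf N T X A v s = a s) ∧ aOf N T X A v τ = a τ

def RDen (g : Strat N T X A) (i : Fin N) (τ : Fin T) (a : Fin T → ∀ j, A j) : ℝ :=
  ∑ v : ∀ p, bet N T X A p, if CondADen N T X A i τ a v then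
    ∏ p ∈ RestDen N T i τ, Hker N T X A Q1 Qk g p v (v p) else 0

def RNum (g : Strat N T X A) (i : Fin N) (τ : Fin T) (a : Fin T → ∀ j, A j) : ℝ :=
  ∑ v : ∀ p, bet N T X A p, if CondANum N T X A τ a v then
    ∏ p ∈ RestNum N T i τ, Hker N T X A Q1 Qk g p v (v p) else 0


lemma mem_ESetDen (i : Fin N) (τ : Fin T) (t : Fin T) (c : Fin N ⊕ Fin N) :
    (t, c) ∈ ESetDen N T i τ ↔ ((τ : ℕ) < (t : ℕ) ∨
      ((t : ℕ) = (τ : ℕ) ∧ c ≠ Sum.inl i ∧ c ≠ Sum.inr i)) := by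
  simp [ESetDen]

lemma mem_ESetNum (i : Fin N) (τ : Fin T) (t : Fin T) (c : Fin N ⊕ Fin N) :
    (t, c) ∈ ESetNum N T i τ ↔ ((τ : ℕ) + 1 ≤ (t : ℕ) ∧
      ¬((t : ℕ) = (τ : ℕ) + 1 ∧ c = Sum.inl i)) := by
  simp [ESetNum]

lemma mem_PiSetDen (i : Fin N) (τ : Fin T) (t : Fin T) (c : Fin N ⊕ Fin N) :
    (t, c) ∈ PiSetDen N T i τ ↔ ((t : ℕ) ≤ (τ : ℕ) ∧ (c = Sum.inl i ∨ c = Sum.inr i)) := by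
  simp [PiSetDen]

lemma mem_PiSetNum (i : Fin N) (τ : Fin T) (t : Fin T) (c : Fin N ⊕ Fin N) :
    (t, c) ∈ PiSetNum N T i τ ↔ (((t : ℕ) ≤ (τ : ℕ) ∧ (c = Sum.inl i ∨ c = Sum.inr i)) ∨
      ((t : ℕ) = (τ : ℕ) + 1 ∧ c = Sum.inl i)) := by
  simp [PiSetNum]

lemma mem_RestDen (i : Fin N) (τ : Fin T) (t : Fin T) (c : Fin N ⊕ Fin N) :
    (t, c) ∈ RestDen N T i τ ↔ ((t : ℕ) < (τ : ℕ) ∧ c ≠ Sum.inl i ∧ c ≠ Sum.inr i) := by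
  simp [RestDen]

lemma mem_RestNum (i : Fin N) (τ : Fin T) (t : Fin T) (c : Fin N ⊕ Fin N) :
    (t, c) ∈ RestNum N T i τ ↔ ((t : ℕ) ≤ (τ : ℕ) ∧ c ≠ Sum.inl i ∧ c ≠ Sum.inr i) := by
  simp [RestNum]

lemma mem_E2Set (i : Fin N) (m : ℕ) (t : Fin T) (c : Fin N ⊕ Fin N) :
    (t, c) ∈ E2Set N T i m ↔ ((t : ℕ) ≤ m ∧ c = Sum.inl i) := by
  simp [E2Set]

lemma den1_repr [∀ j, Nonempty (X j)] [∀ j, Nonempty (A j)]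
    (g : Strat N T X A) (hK : StochKer N T X A Q1 Qk) (hg : Stochastic N T X A g)
    (hgc : Causal N T X A g) (i : Fin N) (τ : Fin T) (a : Fin T → ∀ j, A j)
    (xi : Fin T → X i) :
    den1 N T X A Q1 Qk g i τ a xi
      = cardInv N T X A (ESetDen N T i τ)
        * (∏ p ∈ PiSetDen N T i τ, Hc N T X A Q1 Qk g i a xi p)
        * (cardInv N T X A (E2Set N T i (τ : ℕ)) * RDen N T X A Q1 Qk g i τ a) := by
  classical
  haveI hbne : ∀ p : Idx N T, Nonempty (bet N T X A p) := by
    rintro ⟨t, j | j⟩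
    · exact ⟨Classical.arbitrary (X j)⟩
    · exact ⟨Classical.arbitrary (A j)⟩
  have hT : 0 < T := lt_of_le_of_lt (Nat.zero_le _) τ.isLt
  have step1 : den1 N T X A Q1 Qk g i τ a xi
      = ∑ v : ∀ p, bet N T X A p,
          (if (∀ s : Fin T, (s : ℕ) < (τ : ℕ) → aOf N T X A v s = a s) ∧
              aOf N T X A v τ i = a τ i ∧
              (∀ s : Fin T, (s : ℕ) ≤ (τ : ℕ) → xOf N T X A v s i = xi s)
           then ∏ p : Idx N T, Hker N T X A Q1 Qk g p v (v p) else 0) := by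
    rw [den1, ← Finset.sum_product', Finset.univ_product_univ]
    refine Fintype.sum_equiv (eXA N T X A) _ _ ?_
    rintro ⟨x', a'⟩
    show (if (∀ s : Fin T, (s : ℕ) < (τ : ℕ) → a' s = a s) ∧ a' τ i = a τ i ∧
        (∀ s : Fin T, (s : ℕ) ≤ (τ : ℕ) → x' s i = xi s) then trajP N T X A Q1 Qk g x' a' else 0)
      = (if (∀ s : Fin T, (s : ℕ) < (τ : ℕ) → a' s = a s) ∧ a' τ i = a τ i ∧
        (∀ s : Fin T, (s : ℕ) ≤ (τ : ℕ) → x' s i = xi s) then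
          ∏ p : Idx N T, Hker N T X A Q1 Qk g p (eXA N T X A (x', a')) ((eXA N T X A (x', a')) p)
        else 0)
    by_cases hC : (∀ s : Fin T, (s : ℕ) < (τ : ℕ) → a' s = a s) ∧ a' τ i = a τ i ∧
        (∀ s : Fin T, (s : ℕ) ≤ (τ : ℕ) → x' s i = xi s)
    · rw [if_pos hC, if_pos hC]
      exact trajP_repr N T X A Q1 Qk g hT (eXA N T X A (x', a'))
    · rw [if_neg hC, if_neg hC]
  rw [step1]
  have hEc : ∀ v : ∀ p, bet N T X A p,
      (∏ p : Idx N T, Hker N T X A Q1 Qk g p v (v p))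
        = (∏ p ∈ (ESetDen N T i τ)ᶜ, Hker N T X A Q1 Qk g p v (v p))
          * ∏ p ∈ ESetDen N T i τ, Hker N T X A Q1 Qk g p v (v p) :=
    fun v => (Finset.prod_compl_mul_prod _ _).symm
  have hdep : ∀ p ∈ ESetDen N T i τ, ∀ v v' : ∀ q, bet N T X A q,
      (∀ q, rk N T q < rk N T p → v q = v' q) → ∀ b, Hker N T X A Q1 Qk g p v b = Hker N T X A Q1 Qk g p v' b := by
    rintro ⟨t, j | j⟩ hp v v' hvv' b
    · exact Hker_inl_dep N T X A Q1 Qk g t j v v'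
        (fun s hs => hvv' (s, Sum.inl j) (by simp [rk]; omega))
        (fun s j' hs => hvv' (s, Sum.inr j') (by simp [rk]; omega)) b
    · exact Hker_inr_dep N T X A Q1 Qk g hgc t j v v'
        (fun s j' hs => hvv' (s, Sum.inr j') (by simp [rk]; omega))
        (fun s hs => hvv' (s, Sum.inl j) (by simp [rk]; omega)) b
  have hnorm : ∀ p ∈ ESetDen N T i τ, ∀ v, ∑ b, Hker N T X A Q1 Qk g p v b = 1 :=
    fun p _ v => Hker_norm N T X A Q1 Qk g hK hg p v
  have hFdep : ∀ v v' : ∀ q, bet N T X A q, (∀ q, q ∉ ESetDen N T i τ → v q = v' q) →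
      (if (∀ s : Fin T, (s : ℕ) < (τ : ℕ) → aOf N T X A v s = a s) ∧
              aOf N T X A v τ i = a τ i ∧
              (∀ s : Fin T, (s : ℕ) ≤ (τ : ℕ) → xOf N T X A v s i = xi s)
       then ∏ p ∈ (ESetDen N T i τ)ᶜ, Hker N T X A Q1 Qk g p v (v p) else 0)
      = (if (∀ s : Fin T, (s : ℕ) < (τ : ℕ) → aOf N T X A v' s = a s) ∧
              aOf N T X A v' τ i = a τ i ∧
              (∀ s : Fin T, (s : ℕ) ≤ (τ : ℕ) → xOf N T X A v' s i = xi s)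
       then ∏ p ∈ (ESetDen N T i τ)ᶜ, Hker N T X A Q1 Qk g p v' (v' p) else 0) := by
    intro v v' hvv'
    have hA : ∀ (s : Fin T) (j : Fin N), (s : ℕ) < (τ : ℕ) →
        v (s, Sum.inr j) = v' (s, Sum.inr j) := by
      intro s j hs
      refine hvv' _ (fun hmem => ?_)
      rw [mem_ESetDen] at hmem
      rcases hmem with h | ⟨h, _⟩ <;> omega
    have hAτ : v (τ, Sum.inr i) = v' (τ, Sum.inr i) := by
      refine hvv' _ (fun hmem => ?_)
      rw [mem_ESetDen] at hmem
      rcases hmem with h | ⟨_, _, h2⟩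
      · omega
      · exact h2 rfl
    have hX : ∀ s : Fin T, (s : ℕ) ≤ (τ : ℕ) → v (s, Sum.inl i) = v' (s, Sum.inl i) := by
      intro s hs
      refine hvv' _ (fun hmem => ?_)
      rw [mem_ESetDen] at hmem
      rcases hmem with h | ⟨_, h1, _⟩
      · omega
      · exact h1 rfl
    have e1 : ∀ s : Fin T, (s : ℕ) < (τ : ℕ) → aOf N T X A v s = aOf N T X A v' s :=
      fun s hs => funext fun j => hA s j hs
    have hCond : ((∀ s : Fin T, (s : ℕ) < (τ : ℕ) → aOf N T X A v s = a s) ∧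
              aOf N T X A v τ i = a τ i ∧
              (∀ s : Fin T, (s : ℕ) ≤ (τ : ℕ) → xOf N T X A v s i = xi s)) ↔ ((∀ s : Fin T, (s : ℕ) < (τ : ℕ) → aOf N T X A v' s = a s) ∧
              aOf N T X A v' τ i = a τ i ∧
              (∀ s : Fin T, (s : ℕ) ≤ (τ : ℕ) → xOf N T X A v' s i = xi s)) := by
      constructor
      · rintro ⟨h1, h2, h3⟩
        exact ⟨fun s hs => (e1 s hs).symm.trans (h1 s hs), hAτ.symm.trans h2,
          fun s hs => (hX s hs).symm.trans (h3 s hs)⟩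
      · rintro ⟨h1, h2, h3⟩
        exact ⟨fun s hs => (e1 s hs).trans (h1 s hs), hAτ.trans h2,
          fun s hs => (hX s hs).trans (h3 s hs)⟩
    by_cases hC : (∀ s : Fin T, (s : ℕ) < (τ : ℕ) → aOf N T X A v s = a s) ∧
              aOf N T X A v τ i = a τ i ∧
              (∀ s : Fin T, (s : ℕ) ≤ (τ : ℕ) → xOf N T X A v s i = xi s)
    · rw [if_pos hC, if_pos (hCond.1 hC)]
      refine Finset.prod_congr rfl ?_
      rintro ⟨t, j | j⟩ hp
      · have hp0 : (t, Sum.inl j) ∉ ESetDen N T i τ := Finset.mem_compl.1 hp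
        have ht : (t : ℕ) ≤ (τ : ℕ) := by
          by_contra h
          exact hp0 (by rw [mem_ESetDen]; left; omega)
        have hb : v (t, Sum.inl j) = v' (t, Sum.inl j) := hvv' _ hp0
        rw [hb]
        refine Hker_inl_dep N T X A Q1 Qk g t j v v'
          (fun s hs => hvv' _ (fun hmem => ?_)) (fun s j' hs => hvv' _ (fun hmem => ?_)) _ <;>
        · rw [mem_ESetDen] at hmem
          rcases hmem with h | ⟨h, _⟩ <;> omega
      · have hp0 : (t, Sum.inr j) ∉ ESetDen N T i τ := Finset.mem_compl.1 hp
        have ht : (t : ℕ) ≤ (τ : ℕ) := by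
          by_contra h
          exact hp0 (by rw [mem_ESetDen]; left; omega)
        have hti : (t : ℕ) = (τ : ℕ) → j = i := by
          intro hteq
          by_contra hne
          exact hp0 (by
            rw [mem_ESetDen]
            right
            exact ⟨hteq, by simp, by simp [hne]⟩)
        have hb : v (t, Sum.inr j) = v' (t, Sum.inr j) := hvv' _ hp0
        rw [hb]
        refine Hker_inr_dep N T X A Q1 Qk g hgc t j v v'
          (fun s j' hs => hvv' _ (fun hmem => ?_)) (fun s hs => hvv' _ (fun hmem => ?_)) _
        · rw [mem_ESetDen] at hmem
          rcases hmem with h | ⟨h, _⟩ <;> omega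
        · rw [mem_ESetDen] at hmem
          rcases hmem with h | ⟨heq, h1, _⟩
          · omega
          · exact h1 (by rw [hti (by omega)])
    · rw [if_neg hC, if_neg (fun hC' => hC (hCond.2 hC'))]
  have step3 : (∑ v : ∀ p, bet N T X A p,
        (if (∀ s : Fin T, (s : ℕ) < (τ : ℕ) → aOf N T X A v s = a s) ∧
              aOf N T X A v τ i = a τ i ∧
              (∀ s : Fin T, (s : ℕ) ≤ (τ : ℕ) → xOf N T X A v s i = xi s)
         then ∏ p : Idx N T, Hker N T X A Q1 Qk g p v (v p) else 0))
      = cardInv N T X A (ESetDen N T i τ) * ∑ v : ∀ p, bet N T X A p,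
          (if (∀ s : Fin T, (s : ℕ) < (τ : ℕ) → aOf N T X A v s = a s) ∧
              aOf N T X A v τ i = a τ i ∧
              (∀ s : Fin T, (s : ℕ) ≤ (τ : ℕ) → xOf N T X A v s i = xi s)
           then ∏ p ∈ (ESetDen N T i τ)ᶜ, Hker N T X A Q1 Qk g p v (v p) else 0) := by
    rw [cardInv, ← telescope (rk N T) (Hker N T X A Q1 Qk g) (ESetDen N T i τ) hdep hnorm _ hFdep]
    refine Finset.sum_congr rfl fun v _ => ?_
    rw [hEc v]
    split_ifs with h
    · rfl
    · rw [zero_mul]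
  rw [step3]
  have hsplitset : (ESetDen N T i τ)ᶜ = PiSetDen N T i τ ∪ RestDen N T i τ := by
    ext ⟨t, c⟩
    rw [Finset.mem_compl, Finset.mem_union, mem_ESetDen, mem_PiSetDen, mem_RestDen]
    constructor
    · intro h
      by_cases hc : c = Sum.inl i ∨ c = Sum.inr i
      · left
        refine ⟨?_, hc⟩
        by_contra h'
        exact h (Or.inl (by omega))
      · right
        push_neg at hc
        have h1 : ¬ (τ : ℕ) < (t : ℕ) := fun hh => h (Or.inl hh)
        have h2 : (t : ℕ) ≠ (τ : ℕ) := fun hh => h (Or.inr ⟨hh, hc.1, hc.2⟩)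
        exact ⟨by omega, hc.1, hc.2⟩
    · intro h hmem
      rcases h with ⟨h1, h2⟩ | ⟨h1, h2, h3⟩
      · rcases hmem with hh | ⟨hh, hc1, hc2⟩
        · omega
        · rcases h2 with rfl | rfl
          · exact hc1 rfl
          · exact hc2 rfl
      · rcases hmem with hh | ⟨hh, _, _⟩ <;> omega
  have hdisj : Disjoint (PiSetDen N T i τ) (RestDen N T i τ) := by
    rw [Finset.disjoint_left]
    rintro ⟨t, c⟩ hp hr
    rw [mem_PiSetDen] at hp
    rw [mem_RestDen] at hr
    rcases hp.2 with rfl | rfl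
    · exact hr.2.1 rfl
    · exact hr.2.2 rfl
  have hPi : ∀ v : ∀ p, bet N T X A p, ((∀ s : Fin T, (s : ℕ) < (τ : ℕ) → aOf N T X A v s = a s) ∧
              aOf N T X A v τ i = a τ i ∧
              (∀ s : Fin T, (s : ℕ) ≤ (τ : ℕ) → xOf N T X A v s i = xi s)) →
      (∏ p ∈ PiSetDen N T i τ, Hker N T X A Q1 Qk g p v (v p)) = ∏ p ∈ PiSetDen N T i τ, Hc N T X A Q1 Qk g i a xi p := by
    intro v hC
    obtain ⟨h1, h2, h3⟩ := hC
    have ex : ∀ s : Fin T, (s : ℕ) ≤ (τ : ℕ) → v (s, Sum.inl i) = xi s := h3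
    have ea : ∀ (s : Fin T) (j' : Fin N), (s : ℕ) < (τ : ℕ) → v (s, Sum.inr j') = a s j' :=
      fun s j' hs => congrFun (h1 s hs) j'
    refine Finset.prod_congr rfl ?_
    rintro ⟨t, c⟩ hp
    rw [mem_PiSetDen] at hp
    obtain ⟨ht, hc⟩ := hp
    rcases hc with rfl | rfl
    · rw [Hker_inl, Hc_inl]
      by_cases h0 : 0 < (t : ℕ)
      · rw [dif_pos h0, dif_pos h0]
        rw [ex t ht,
          ex ⟨(t : ℕ) - 1, lt_of_le_of_lt (Nat.sub_le _ _) t.isLt⟩ (by simp; omega)]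
        have hfa : (fun j' => v (⟨(t : ℕ) - 1, lt_of_le_of_lt (Nat.sub_le _ _) t.isLt⟩, Sum.inr j'))
            = a ⟨(t : ℕ) - 1, lt_of_le_of_lt (Nat.sub_le _ _) t.isLt⟩ :=
          funext fun j' => ea _ j' (by simp; omega)
        rw [hfa]
      · rw [dif_neg h0, dif_neg h0, ex t ht]
    · rw [Hker_inr, Hc_inr]
      have hb : v (t, Sum.inr i) = a t i := by
        rcases Nat.lt_or_ge (t : ℕ) (τ : ℕ) with h | h
        · exact congrFun (h1 t h) i
        · have htt : t = τ := Fin.ext (by omega)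
          subst htt
          exact h2
      rw [hb]
      have hcau := hgc i t (aOf N T X A v) a (fun s => v (s, Sum.inl i)) xi
        (fun s hs => h1 s (by omega)) (fun s hs => ex s (by omega))
      rw [hcau]
  set vref : ∀ p, bet N T X A p :=
    eXA N T X A (fun s => Function.update (fun j => Classical.arbitrary (X j)) i (xi s), a)
    with hvref
  have hvref_inl : ∀ s : Fin T, vref (s, Sum.inl i) = xi s := by
    intro s
    show Function.update (fun j => Classical.arbitrary (X j)) i (xi s) i = xi s
    exact Function.update_self _ _ _
  have hXiprod : ∀ v : ∀ p, bet N T X A p,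
      (if (∀ s : Fin T, (s : ℕ) ≤ (τ : ℕ) → xOf N T X A v s i = xi s) then (1:ℝ) else 0)
        = ∏ p ∈ E2Set N T i (τ : ℕ), (if v p = vref p then (1:ℝ) else 0) := by
    intro v
    rw [Finset.prod_boole]
    by_cases h : ∀ p ∈ E2Set N T i (τ : ℕ), v p = vref p
    · rw [if_pos h, if_pos ?_]
      intro s hs
      exact (h (s, Sum.inl i) (by rw [mem_E2Set]; exact ⟨hs, rfl⟩)).trans (hvref_inl s)
    · rw [if_neg h, if_neg ?_]
      intro hh
      refine h ?_
      rintro ⟨t, c⟩ hp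
      rw [mem_E2Set] at hp
      obtain ⟨hpt, rfl⟩ := hp
      rw [hvref_inl t]
      exact hh t hpt
  have h4 : ∀ v : ∀ p, bet N T X A p,
      (if (∀ s : Fin T, (s : ℕ) < (τ : ℕ) → aOf N T X A v s = a s) ∧
              aOf N T X A v τ i = a τ i ∧
              (∀ s : Fin T, (s : ℕ) ≤ (τ : ℕ) → xOf N T X A v s i = xi s)
       then ∏ p ∈ (ESetDen N T i τ)ᶜ, Hker N T X A Q1 Qk g p v (v p) else 0)
      = (∏ p ∈ PiSetDen N T i τ, Hc N T X A Q1 Qk g i a xi p) *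
        ((if CondADen N T X A i τ a v then ∏ p ∈ RestDen N T i τ, Hker N T X A Q1 Qk g p v (v p) else 0) *
          ∏ p ∈ E2Set N T i (τ : ℕ), (if v p = vref p then (1:ℝ) else 0)) := by
    intro v
    rw [← hXiprod v]
    by_cases hC : (∀ s : Fin T, (s : ℕ) < (τ : ℕ) → aOf N T X A v s = a s) ∧
              aOf N T X A v τ i = a τ i ∧
              (∀ s : Fin T, (s : ℕ) ≤ (τ : ℕ) → xOf N T X A v s i = xi s)
    · rw [if_pos hC, hsplitset, Finset.prod_union hdisj, hPi v hC,
        if_pos (show CondADen N T X A i τ a v from ⟨hC.1, hC.2.1⟩), if_pos hC.2.2, mul_one]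
    · rw [if_neg hC]
      by_cases hA : CondADen N T X A i τ a v
      · have h2 : ¬ (∀ s : Fin T, (s : ℕ) ≤ (τ : ℕ) → xOf N T X A v s i = xi s) :=
          fun h2 => hC ⟨hA.1, hA.2, h2⟩
        rw [if_neg h2, mul_zero, mul_zero]
      · rw [if_neg hA, zero_mul, mul_zero]
  rw [Finset.sum_congr rfl (fun v _ => h4 v), ← Finset.mul_sum]
  rw [← mul_assoc]
  congr 1
  have hdep2 : ∀ p ∈ E2Set N T i (τ : ℕ), ∀ v v' : ∀ q, bet N T X A q,
      (∀ q, rk N T q < rk N T p → v q = v' q) → ∀ b : bet N T X A p,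
        (if b = vref p then (1:ℝ) else 0) = (if b = vref p then (1:ℝ) else 0) :=
    fun _ _ _ _ _ _ => rfl
  have hnorm2 : ∀ p ∈ E2Set N T i (τ : ℕ), ∀ v : ∀ q, bet N T X A q,
      ∑ b : bet N T X A p, (if b = vref p then (1:ℝ) else 0) = 1 := by
    intro p _ v
    simp
  have hF2 : ∀ v v' : ∀ q, bet N T X A q, (∀ q, q ∉ E2Set N T i (τ : ℕ) → v q = v' q) →
      (if CondADen N T X A i τ a v then ∏ p ∈ RestDen N T i τ, Hker N T X A Q1 Qk g p v (v p) else 0)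
      = (if CondADen N T X A i τ a v' then ∏ p ∈ RestDen N T i τ, Hker N T X A Q1 Qk g p v' (v' p) else 0) := by
    intro v v' hvv'
    have ha : ∀ (s : Fin T) (j' : Fin N), v (s, Sum.inr j') = v' (s, Sum.inr j') := by
      intro s j'
      refine hvv' _ (fun hmem => ?_)
      rw [mem_E2Set] at hmem
      simpa using hmem.2
    have haf : ∀ s : Fin T, aOf N T X A v s = aOf N T X A v' s :=
      fun s => funext fun j' => ha s j'
    have hCA : CondADen N T X A i τ a v ↔ CondADen N T X A i τ a v' := by
      constructor
      · rintro ⟨h1, h2⟩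
        exact ⟨fun s hs => (haf s).symm.trans (h1 s hs),
          ((congrFun (haf τ) i).symm).trans h2⟩
      · rintro ⟨h1, h2⟩
        exact ⟨fun s hs => (haf s).trans (h1 s hs), (congrFun (haf τ) i).trans h2⟩
    by_cases hA : CondADen N T X A i τ a v
    · rw [if_pos hA, if_pos (hCA.1 hA)]
      refine Finset.prod_congr rfl ?_
      rintro ⟨t, c⟩ hp
      rw [mem_RestDen] at hp
      obtain ⟨htp, hc1, hc2⟩ := hp
      rcases c with j | j
      · have hji : j ≠ i := fun hh => hc1 (by rw [hh])
        have hxj : ∀ s : Fin T, v (s, Sum.inl j) = v' (s, Sum.inl j) := by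
          intro s
          refine hvv' _ (fun hmem => ?_)
          rw [mem_E2Set] at hmem
          exact hji (Sum.inl.inj hmem.2)
        rw [hxj (t)]
        exact Hker_inl_dep N T X A Q1 Qk g t j v v' (fun s _ => hxj s)
          (fun s j' _ => ha s j') _
      · have hji : j ≠ i := fun hh => hc2 (by rw [hh])
        have hxj : ∀ s : Fin T, v (s, Sum.inl j) = v' (s, Sum.inl j) := by
          intro s
          refine hvv' _ (fun hmem => ?_)
          rw [mem_E2Set] at hmem
          exact hji (Sum.inl.inj hmem.2)
        rw [ha t j]
        exact Hker_inr_dep N T X A Q1 Qk g hgc t j v v' (fun s j' _ => ha s j')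
          (fun s _ => hxj s) _
    · rw [if_neg hA, if_neg (fun h => hA (hCA.2 h))]
  have tel2 := telescope (rk N T) (fun p _ b => if b = vref p then (1:ℝ) else 0)
      (E2Set N T i (τ : ℕ)) hdep2 hnorm2
      (fun v => if CondADen N T X A i τ a v then ∏ p ∈ RestDen N T i τ, Hker N T X A Q1 Qk g p v (v p) else 0)
      hF2
  rw [tel2]
  rw [RDen, cardInv]



lemma num1_repr [∀ j, Nonempty (X j)] [∀ j, Nonempty (A j)]
    (g : Strat N T X A) (hK : StochKer N T X A Q1 Qk) (hg : Stochastic N T X A g)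
    (hgc : Causal N T X A g) (i : Fin N) (τ : Fin T) (h1 : (τ : ℕ) + 1 < T)
    (a : Fin T → ∀ j, A j) (xi : Fin T → X i) :
    num1 N T X A Q1 Qk g i τ h1 a xi
      = cardInv N T X A (ESetNum N T i τ)
        * (∏ p ∈ PiSetNum N T i τ, Hc N T X A Q1 Qk g i a xi p)
        * (cardInv N T X A (E2Set N T i ((τ : ℕ) + 1)) * RNum N T X A Q1 Qk g i τ a) := by
  classical
  haveI hbne : ∀ p : Idx N T, Nonempty (bet N T X A p) := by
    rintro ⟨t, j | j⟩
    · exact ⟨Classical.arbitrary (X j)⟩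
    · exact ⟨Classical.arbitrary (A j)⟩
  have hT : 0 < T := lt_of_le_of_lt (Nat.zero_le _) τ.isLt
  have step1 : num1 N T X A Q1 Qk g i τ h1 a xi
      = ∑ v : ∀ p, bet N T X A p,
          (if (∀ s : Fin T, (s : ℕ) < (τ : ℕ) → aOf N T X A v s = a s) ∧
              aOf N T X A v τ = a τ ∧
              (∀ s : Fin T, (s : ℕ) ≤ (τ : ℕ) + 1 → xOf N T X A v s i = xi s)
           then ∏ p : Idx N T, Hker N T X A Q1 Qk g p v (v p) else 0) := by
    rw [num1, ← Finset.sum_product', Finset.univ_product_univ]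
    refine Fintype.sum_equiv (eXA N T X A) _ _ ?_
    rintro ⟨x', a'⟩
    show (if (∀ s : Fin T, (s : ℕ) < (τ : ℕ) → a' s = a s) ∧ a' τ = a τ ∧
        (∀ s : Fin T, (s : ℕ) ≤ (τ : ℕ) + 1 → x' s i = xi s) then trajP N T X A Q1 Qk g x' a' else 0)
      = (if (∀ s : Fin T, (s : ℕ) < (τ : ℕ) → a' s = a s) ∧ a' τ = a τ ∧
        (∀ s : Fin T, (s : ℕ) ≤ (τ : ℕ) + 1 → x' s i = xi s) then
          ∏ p : Idx N T, Hker N T X A Q1 Qk g p (eXA N T X A (x', a')) ((eXA N T X A (x', a')) p)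
        else 0)
    by_cases hC : (∀ s : Fin T, (s : ℕ) < (τ : ℕ) → a' s = a s) ∧ a' τ = a τ ∧
        (∀ s : Fin T, (s : ℕ) ≤ (τ : ℕ) + 1 → x' s i = xi s)
    · rw [if_pos hC, if_pos hC]
      exact trajP_repr N T X A Q1 Qk g hT (eXA N T X A (x', a'))
    · rw [if_neg hC, if_neg hC]
  rw [step1]
  have hdep : ∀ p ∈ ESetNum N T i τ, ∀ v v' : ∀ q, bet N T X A q,
      (∀ q, rk N T q < rk N T p → v q = v' q) → ∀ b, Hker N T X A Q1 Qk g p v b = Hker N T X A Q1 Qk g p v' b := by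
    rintro ⟨t, j | j⟩ hp v v' hvv' b
    · exact Hker_inl_dep N T X A Q1 Qk g t j v v'
        (fun s hs => hvv' (s, Sum.inl j) (by simp [rk]; omega))
        (fun s j' hs => hvv' (s, Sum.inr j') (by simp [rk]; omega)) b
    · exact Hker_inr_dep N T X A Q1 Qk g hgc t j v v'
        (fun s j' hs => hvv' (s, Sum.inr j') (by simp [rk]; omega))
        (fun s hs => hvv' (s, Sum.inl j) (by simp [rk]; omega)) b
  have hnorm : ∀ p ∈ ESetNum N T i τ, ∀ v, ∑ b, Hker N T X A Q1 Qk g p v b = 1 :=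
    fun p _ v => Hker_norm N T X A Q1 Qk g hK hg p v
  have hFdep : ∀ v v' : ∀ q, bet N T X A q, (∀ q, q ∉ ESetNum N T i τ → v q = v' q) →
      (if (∀ s : Fin T, (s : ℕ) < (τ : ℕ) → aOf N T X A v s = a s) ∧
              aOf N T X A v τ = a τ ∧
              (∀ s : Fin T, (s : ℕ) ≤ (τ : ℕ) + 1 → xOf N T X A v s i = xi s)
       then ∏ p ∈ (ESetNum N T i τ)ᶜ, Hker N T X A Q1 Qk g p v (v p) else 0)
      = (if (∀ s : Fin T, (s : ℕ) < (τ : ℕ) → aOf N T X A v' s = a s) ∧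
              aOf N T X A v' τ = a τ ∧
              (∀ s : Fin T, (s : ℕ) ≤ (τ : ℕ) + 1 → xOf N T X A v' s i = xi s)
       then ∏ p ∈ (ESetNum N T i τ)ᶜ, Hker N T X A Q1 Qk g p v' (v' p) else 0) := by
    intro v v' hvv'
    have hA : ∀ (s : Fin T) (j : Fin N), (s : ℕ) ≤ (τ : ℕ) →
        v (s, Sum.inr j) = v' (s, Sum.inr j) := by
      intro s j hs
      refine hvv' _ (fun hmem => ?_)
      rw [mem_ESetNum] at hmem
      omega
    have hX : ∀ s : Fin T, (s : ℕ) ≤ (τ : ℕ) + 1 → v (s, Sum.inl i) = v' (s, Sum.inl i) := by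
      intro s hs
      refine hvv' _ (fun hmem => ?_)
      rw [mem_ESetNum] at hmem
      exact hmem.2 ⟨by omega, rfl⟩
    have e1 : ∀ s : Fin T, (s : ℕ) ≤ (τ : ℕ) → aOf N T X A v s = aOf N T X A v' s :=
      fun s hs => funext fun j => hA s j hs
    have hCond : ((∀ s : Fin T, (s : ℕ) < (τ : ℕ) → aOf N T X A v s = a s) ∧
              aOf N T X A v τ = a τ ∧
              (∀ s : Fin T, (s : ℕ) ≤ (τ : ℕ) + 1 → xOf N T X A v s i = xi s)) ↔ ((∀ s : Fin T, (s : ℕ) < (τ : ℕ) → aOf N T X A v' s = a s) ∧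
              aOf N T X A v' τ = a τ ∧
              (∀ s : Fin T, (s : ℕ) ≤ (τ : ℕ) + 1 → xOf N T X A v' s i = xi s)) := by
      constructor
      · rintro ⟨h1, h2, h3⟩
        exact ⟨fun s hs => (e1 s (by omega)).symm.trans (h1 s hs),
          (e1 τ (le_refl _)).symm.trans h2,
          fun s hs => (hX s hs).symm.trans (h3 s hs)⟩
      · rintro ⟨h1, h2, h3⟩
        exact ⟨fun s hs => (e1 s (by omega)).trans (h1 s hs), (e1 τ (le_refl _)).trans h2,
          fun s hs => (hX s hs).trans (h3 s hs)⟩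
    by_cases hC : (∀ s : Fin T, (s : ℕ) < (τ : ℕ) → aOf N T X A v s = a s) ∧
              aOf N T X A v τ = a τ ∧
              (∀ s : Fin T, (s : ℕ) ≤ (τ : ℕ) + 1 → xOf N T X A v s i = xi s)
    · rw [if_pos hC, if_pos (hCond.1 hC)]
      refine Finset.prod_congr rfl ?_
      rintro ⟨t, j | j⟩ hp
      · have hp0 : (t, Sum.inl j) ∉ ESetNum N T i τ := Finset.mem_compl.1 hp
        have ht : (t : ℕ) ≤ (τ : ℕ) + 1 := by
          by_contra h
          exact hp0 (by rw [mem_ESetNum]; exact ⟨by omega, fun hh => by omega⟩)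
        have hb : v (t, Sum.inl j) = v' (t, Sum.inl j) := hvv' _ hp0
        rw [hb]
        refine Hker_inl_dep N T X A Q1 Qk g t j v v'
          (fun s hs => hvv' _ (fun hmem => ?_)) (fun s j' hs => hvv' _ (fun hmem => ?_)) _ <;>
        · rw [mem_ESetNum] at hmem
          omega
      · have hp0 : (t, Sum.inr j) ∉ ESetNum N T i τ := Finset.mem_compl.1 hp
        have ht : (t : ℕ) ≤ (τ : ℕ) := by
          by_contra h
          refine hp0 (by
            rw [mem_ESetNum]
            refine ⟨by omega, ?_⟩
            rintro ⟨-, hh⟩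
            exact absurd hh (by simp))
        have hb : v (t, Sum.inr j) = v' (t, Sum.inr j) := hvv' _ hp0
        rw [hb]
        refine Hker_inr_dep N T X A Q1 Qk g hgc t j v v'
          (fun s j' hs => hvv' _ (fun hmem => ?_)) (fun s hs => hvv' _ (fun hmem => ?_)) _ <;>
        · rw [mem_ESetNum] at hmem
          omega
    · rw [if_neg hC, if_neg (fun hC' => hC (hCond.2 hC'))]
  have step3 : (∑ v : ∀ p, bet N T X A p,
        (if (∀ s : Fin T, (s : ℕ) < (τ : ℕ) → aOf N T X A v s = a s) ∧
              aOf N T X A v τ = a τ ∧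
              (∀ s : Fin T, (s : ℕ) ≤ (τ : ℕ) + 1 → xOf N T X A v s i = xi s)
         then ∏ p : Idx N T, Hker N T X A Q1 Qk g p v (v p) else 0))
      = cardInv N T X A (ESetNum N T i τ) * ∑ v : ∀ p, bet N T X A p,
          (if (∀ s : Fin T, (s : ℕ) < (τ : ℕ) → aOf N T X A v s = a s) ∧
              aOf N T X A v τ = a τ ∧
              (∀ s : Fin T, (s : ℕ) ≤ (τ : ℕ) + 1 → xOf N T X A v s i = xi s)
           then ∏ p ∈ (ESetNum N T i τ)ᶜ, Hker N T X A Q1 Qk g p v (v p) else 0) := by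
    rw [cardInv, ← telescope (rk N T) (Hker N T X A Q1 Qk g) (ESetNum N T i τ) hdep hnorm _ hFdep]
    refine Finset.sum_congr rfl fun v _ => ?_
    rw [(Finset.prod_compl_mul_prod (ESetNum N T i τ)
      (fun p => Hker N T X A Q1 Qk g p v (v p))).symm]
    split_ifs with h
    · rfl
    · rw [zero_mul]
  rw [step3]
  have hsplitset : (ESetNum N T i τ)ᶜ = PiSetNum N T i τ ∪ RestNum N T i τ := by
    ext ⟨t, c⟩
    rw [Finset.mem_compl, Finset.mem_union, mem_ESetNum, mem_PiSetNum, mem_RestNum]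
    constructor
    · intro h
      by_cases htle : (t : ℕ) ≤ (τ : ℕ)
      · by_cases hc : c = Sum.inl i ∨ c = Sum.inr i
        · exact Or.inl (Or.inl ⟨htle, hc⟩)
        · push_neg at hc
          exact Or.inr ⟨htle, hc.1, hc.2⟩
      · left
        right
        by_cases hc : c = Sum.inl i
        · refine ⟨?_, hc⟩
          by_contra h2
          exact h ⟨by omega, fun hh => h2 hh.1⟩
        · exfalso
          exact h ⟨by omega, fun hh => hc hh.2⟩
    · intro h hmem
      rcases h with (⟨ht, hc⟩ | ⟨ht, hc⟩) | ⟨ht, _, _⟩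
      · omega
      · exact hmem.2 ⟨ht, hc⟩
      · omega
  have hdisj : Disjoint (PiSetNum N T i τ) (RestNum N T i τ) := by
    rw [Finset.disjoint_left]
    rintro ⟨t, c⟩ hp hr
    rw [mem_PiSetNum] at hp
    rw [mem_RestNum] at hr
    rcases hp with ⟨_, rfl | rfl⟩ | ⟨_, rfl⟩
    · exact hr.2.1 rfl
    · exact hr.2.2 rfl
    · exact hr.2.1 rfl
  have hPi : ∀ v : ∀ p, bet N T X A p, ((∀ s : Fin T, (s : ℕ) < (τ : ℕ) → aOf N T X A v s = a s) ∧
              aOf N T X A v τ = a τ ∧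
              (∀ s : Fin T, (s : ℕ) ≤ (τ : ℕ) + 1 → xOf N T X A v s i = xi s)) →
      (∏ p ∈ PiSetNum N T i τ, Hker N T X A Q1 Qk g p v (v p)) = ∏ p ∈ PiSetNum N T i τ, Hc N T X A Q1 Qk g i a xi p := by
    intro v hC
    obtain ⟨h1, h2, h3⟩ := hC
    have ex : ∀ s : Fin T, (s : ℕ) ≤ (τ : ℕ) + 1 → v (s, Sum.inl i) = xi s := h3
    have ea : ∀ (s : Fin T) (j' : Fin N), (s : ℕ) ≤ (τ : ℕ) → v (s, Sum.inr j') = a s j' := by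
      intro s j' hs
      rcases Nat.lt_or_ge (s : ℕ) (τ : ℕ) with h | h
      · exact congrFun (h1 s h) j'
      · have hst : s = τ := Fin.ext (by omega)
        subst hst
        exact congrFun h2 j'
    refine Finset.prod_congr rfl ?_
    rintro ⟨t, c⟩ hp
    rw [mem_PiSetNum] at hp
    have hgen : ∀ (ht : (t : ℕ) ≤ (τ : ℕ) + 1),
        Hker N T X A Q1 Qk g (t, Sum.inl i) v (v (t, Sum.inl i)) = Hc N T X A Q1 Qk g i a xi (t, Sum.inl i) := by
      intro ht
      rw [Hker_inl, Hc_inl]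
      by_cases h0 : 0 < (t : ℕ)
      · rw [dif_pos h0, dif_pos h0]
        rw [ex t ht,
          ex ⟨(t : ℕ) - 1, lt_of_le_of_lt (Nat.sub_le _ _) t.isLt⟩ (by simp; omega)]
        have hfa : (fun j' => v (⟨(t : ℕ) - 1, lt_of_le_of_lt (Nat.sub_le _ _) t.isLt⟩, Sum.inr j'))
            = a ⟨(t : ℕ) - 1, lt_of_le_of_lt (Nat.sub_le _ _) t.isLt⟩ :=
          funext fun j' => ea _ j' (by simp; omega)
        rw [hfa]
      · rw [dif_neg h0, dif_neg h0, ex t ht]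
    rcases hp with ⟨ht, rfl | rfl⟩ | ⟨ht, rfl⟩
    · exact hgen (by omega)
    · rw [Hker_inr, Hc_inr]
      rw [ea t i ht]
      have hcau := hgc i t (aOf N T X A v) a (fun s => v (s, Sum.inl i)) xi
        (fun s hs => h1 s (by omega)) (fun s hs => ex s (by omega))
      rw [hcau]
    · exact hgen (by omega)
  set vref : ∀ p, bet N T X A p :=
    eXA N T X A (fun s => Function.update (fun j => Classical.arbitrary (X j)) i (xi s), a)
    with hvref
  have hvref_inl : ∀ s : Fin T, vref (s, Sum.inl i) = xi s := by
    intro s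
    show Function.update (fun j => Classical.arbitrary (X j)) i (xi s) i = xi s
    exact Function.update_self _ _ _
  have hXiprod : ∀ v : ∀ p, bet N T X A p,
      (if (∀ s : Fin T, (s : ℕ) ≤ (τ : ℕ) + 1 → xOf N T X A v s i = xi s) then (1:ℝ) else 0)
        = ∏ p ∈ E2Set N T i ((τ : ℕ) + 1), (if v p = vref p then (1:ℝ) else 0) := by
    intro v
    rw [Finset.prod_boole]
    by_cases h : ∀ p ∈ E2Set N T i ((τ : ℕ) + 1), v p = vref p
    · rw [if_pos h, if_pos ?_]
      intro s hs
      exact (h (s, Sum.inl i) (by rw [mem_E2Set]; exact ⟨hs, rfl⟩)).trans (hvref_inl s)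
    · rw [if_neg h, if_neg ?_]
      intro hh
      refine h ?_
      rintro ⟨t, c⟩ hp
      rw [mem_E2Set] at hp
      obtain ⟨hpt, rfl⟩ := hp
      rw [hvref_inl t]
      exact hh t hpt
  have h4 : ∀ v : ∀ p, bet N T X A p,
      (if (∀ s : Fin T, (s : ℕ) < (τ : ℕ) → aOf N T X A v s = a s) ∧
              aOf N T X A v τ = a τ ∧
              (∀ s : Fin T, (s : ℕ) ≤ (τ : ℕ) + 1 → xOf N T X A v s i = xi s)
       then ∏ p ∈ (ESetNum N T i τ)ᶜ, Hker N T X A Q1 Qk g p v (v p) else 0)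
      = (∏ p ∈ PiSetNum N T i τ, Hc N T X A Q1 Qk g i a xi p) *
        ((if CondANum N T X A τ a v then ∏ p ∈ RestNum N T i τ, Hker N T X A Q1 Qk g p v (v p) else 0) *
          ∏ p ∈ E2Set N T i ((τ : ℕ) + 1), (if v p = vref p then (1:ℝ) else 0)) := by
    intro v
    rw [← hXiprod v]
    by_cases hC : (∀ s : Fin T, (s : ℕ) < (τ : ℕ) → aOf N T X A v s = a s) ∧
              aOf N T X A v τ = a τ ∧
              (∀ s : Fin T, (s : ℕ) ≤ (τ : ℕ) + 1 → xOf N T X A v s i = xi s)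
    · rw [if_pos hC, hsplitset, Finset.prod_union hdisj, hPi v hC,
        if_pos (show CondANum N T X A τ a v from ⟨hC.1, hC.2.1⟩), if_pos hC.2.2, mul_one]
    · rw [if_neg hC]
      by_cases hA : CondANum N T X A τ a v
      · have h2 : ¬ (∀ s : Fin T, (s : ℕ) ≤ (τ : ℕ) + 1 → xOf N T X A v s i = xi s) :=
          fun h2 => hC ⟨hA.1, hA.2, h2⟩
        rw [if_neg h2, mul_zero, mul_zero]
      · rw [if_neg hA, zero_mul, mul_zero]
  rw [Finset.sum_congr rfl (fun v _ => h4 v), ← Finset.mul_sum]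
  rw [← mul_assoc]
  congr 1
  have hdep2 : ∀ p ∈ E2Set N T i ((τ : ℕ) + 1), ∀ v v' : ∀ q, bet N T X A q,
      (∀ q, rk N T q < rk N T p → v q = v' q) → ∀ b : bet N T X A p,
        (if b = vref p then (1:ℝ) else 0) = (if b = vref p then (1:ℝ) else 0) :=
    fun _ _ _ _ _ _ => rfl
  have hnorm2 : ∀ p ∈ E2Set N T i ((τ : ℕ) + 1), ∀ v : ∀ q, bet N T X A q,
      ∑ b : bet N T X A p, (if b = vref p then (1:ℝ) else 0) = 1 := by
    intro p _ v
    simp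
  have hF2 : ∀ v v' : ∀ q, bet N T X A q, (∀ q, q ∉ E2Set N T i ((τ : ℕ) + 1) → v q = v' q) →
      (if CondANum N T X A τ a v then ∏ p ∈ RestNum N T i τ, Hker N T X A Q1 Qk g p v (v p) else 0)
      = (if CondANum N T X A τ a v' then ∏ p ∈ RestNum N T i τ, Hker N T X A Q1 Qk g p v' (v' p) else 0) := by
    intro v v' hvv'
    have ha : ∀ (s : Fin T) (j' : Fin N), v (s, Sum.inr j') = v' (s, Sum.inr j') := by
      intro s j'
      refine hvv' _ (fun hmem => ?_)
      rw [mem_E2Set] at hmem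
      simpa using hmem.2
    have haf : ∀ s : Fin T, aOf N T X A v s = aOf N T X A v' s :=
      fun s => funext fun j' => ha s j'
    have hCA : CondANum N T X A τ a v ↔ CondANum N T X A τ a v' := by
      constructor
      · rintro ⟨h1, h2⟩
        exact ⟨fun s hs => (haf s).symm.trans (h1 s hs), (haf τ).symm.trans h2⟩
      · rintro ⟨h1, h2⟩
        exact ⟨fun s hs => (haf s).trans (h1 s hs), (haf τ).trans h2⟩
    by_cases hA : CondANum N T X A τ a v
    · rw [if_pos hA, if_pos (hCA.1 hA)]
      refine Finset.prod_congr rfl ?_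
      rintro ⟨t, c⟩ hp
      rw [mem_RestNum] at hp
      obtain ⟨htp, hc1, hc2⟩ := hp
      rcases c with j | j
      · have hji : j ≠ i := fun hh => hc1 (by rw [hh])
        have hxj : ∀ s : Fin T, v (s, Sum.inl j) = v' (s, Sum.inl j) := by
          intro s
          refine hvv' _ (fun hmem => ?_)
          rw [mem_E2Set] at hmem
          exact hji (Sum.inl.inj hmem.2)
        rw [hxj (t)]
        exact Hker_inl_dep N T X A Q1 Qk g t j v v' (fun s _ => hxj s)
          (fun s j' _ => ha s j') _
      · have hji : j ≠ i := fun hh => hc2 (by rw [hh])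
        have hxj : ∀ s : Fin T, v (s, Sum.inl j) = v' (s, Sum.inl j) := by
          intro s
          refine hvv' _ (fun hmem => ?_)
          rw [mem_E2Set] at hmem
          exact hji (Sum.inl.inj hmem.2)
        rw [ha t j]
        exact Hker_inr_dep N T X A Q1 Qk g hgc t j v v' (fun s j' _ => ha s j')
          (fun s _ => hxj s) _
    · rw [if_neg hA, if_neg (fun h => hA (hCA.2 h))]
  have tel2 := telescope (rk N T) (fun p _ b => if b = vref p then (1:ℝ) else 0)
      (E2Set N T i ((τ : ℕ) + 1)) hdep2 hnorm2
      (fun v => if CondANum N T X A τ a v then ∏ p ∈ RestNum N T i τ, Hker N T X A Q1 Qk g p v (v p) else 0)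
      hF2
  rw [tel2]
  rw [RNum, cardInv]


lemma PiSetNum_insert (i : Fin N) (τ : Fin T) (h1 : (τ : ℕ) + 1 < T) :
    PiSetNum N T i τ
      = insert ((⟨(τ : ℕ) + 1, h1⟩ : Fin T), Sum.inl i) (PiSetDen N T i τ) := by
  ext ⟨t, c⟩
  rw [mem_PiSetNum, Finset.mem_insert, mem_PiSetDen, Prod.mk.injEq]
  constructor
  · rintro (⟨ht, hc⟩ | ⟨ht, rfl⟩)
    · exact Or.inr ⟨ht, hc⟩
    · exact Or.inl ⟨Fin.ext (by simpa using ht), rfl⟩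
  · rintro (⟨rfl, rfl⟩ | ⟨ht, hc⟩)
    · exact Or.inr ⟨by simp, rfl⟩
    · exact Or.inl ⟨ht, hc⟩

lemma tauPlusOne_notmem_PiSetDen (i : Fin N) (τ : Fin T) (h1 : (τ : ℕ) + 1 < T) :
    ((⟨(τ : ℕ) + 1, h1⟩ : Fin T), Sum.inl i) ∉ PiSetDen N T i τ := by
  rw [mem_PiSetDen]
  rintro ⟨ht, -⟩
  simp at ht

lemma PiNum_split (g : Strat N T X A) (i : Fin N) (τ : Fin T) (h1 : (τ : ℕ) + 1 < T)
    (a : Fin T → ∀ j, A j) (xi : Fin T → X i) :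
    (∏ p ∈ PiSetNum N T i τ, Hc N T X A Q1 Qk g i a xi p)
      = Qk i ⟨(τ : ℕ) + 1, h1⟩ (xi τ) (a τ) (xi ⟨(τ : ℕ) + 1, h1⟩) *
        ∏ p ∈ PiSetDen N T i τ, Hc N T X A Q1 Qk g i a xi p := by
  rw [PiSetNum_insert N T i τ h1,
    Finset.prod_insert (tauPlusOne_notmem_PiSetDen N T i τ h1)]
  congr 1

lemma RDen_inv (g ghat : Strat N T X A) (i : Fin N)
    (hagree : ∀ j : Fin N, j ≠ i → g j = ghat j) (τ : Fin T) (a : Fin T → ∀ j, A j) :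
    RDen N T X A Q1 Qk g i τ a = RDen N T X A Q1 Qk ghat i τ a := by
  rw [RDen, RDen]
  refine Finset.sum_congr rfl fun v _ => ?_
  split_ifs with h
  · refine Finset.prod_congr rfl ?_
    rintro ⟨t, c⟩ hp
    rw [mem_RestDen] at hp
    rcases c with j | j
    · rfl
    · have hji : j ≠ i := fun hh => hp.2.2 (by rw [hh])
      rw [Hker_inr, Hker_inr, hagree j hji]
  · rfl

lemma RNum_inv (g ghat : Strat N T X A) (i : Fin N)
    (hagree : ∀ j : Fin N, j ≠ i → g j = ghat j) (τ : Fin T) (a : Fin T → ∀ j, A j) :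
    RNum N T X A Q1 Qk g i τ a = RNum N T X A Q1 Qk ghat i τ a := by
  rw [RNum, RNum]
  refine Finset.sum_congr rfl fun v _ => ?_
  split_ifs with h
  · refine Finset.prod_congr rfl ?_
    rintro ⟨t, c⟩ hp
    rw [mem_RestNum] at hp
    rcases c with j | j
    · rfl
    · have hji : j ≠ i := fun hh => hp.2.2 (by rw [hh])
      rw [Hker_inr, Hker_inr, hagree j hji]
  · rfl

/-- for fixed `g^{-i}`, the pair `((a_{1:t-1}, x_t^i), a_t^i)` is a
controlled Markov process: the conditional law of `(a_{1:t}, x_{t+1}^i)` given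
`(a_{1:t-1}, x_{1:t}^i, a_t^i)` depends only on `(a_{1:t-1}, x_t^i, a_t^i)` and on
`g^{-i}` — not on player `i`'s own strategy or earlier types. -/
theorem controlled_markov_property
    (g ghat : Strat N T X A) (i : Fin N)
    (hK : StochKer N T X A Q1 Qk)
    (hg : Stochastic N T X A g) (hgc : Causal N T X A g)
    (hh : Stochastic N T X A ghat) (hhc : Causal N T X A ghat)
    (hagree : ∀ j : Fin N, j ≠ i → g j = ghat j)
    (τ : Fin T) (h1 : (τ : ℕ) + 1 < T)
    (a : Fin T → ∀ j, A j) (xi xihat : Fin T → X i)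
    (hx : xi τ = xihat τ) (hx' : xi ⟨(τ : ℕ) + 1, h1⟩ = xihat ⟨(τ : ℕ) + 1, h1⟩)
    (hpos : 0 < den1 N T X A Q1 Qk g i τ a xi)
    (hpos' : 0 < den1 N T X A Q1 Qk ghat i τ a xihat) :
    cond1 N T X A Q1 Qk g i τ h1 a xi = cond1 N T X A Q1 Qk ghat i τ h1 a xihat := by
  classical
  have hT : 0 < T := lt_of_le_of_lt (Nat.zero_le _) τ.isLt
  haveI hXne : ∀ j, Nonempty (X j) := by
    rcases isEmpty_or_nonempty (Fin T → ∀ j, X j) with he | hne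
    · exfalso
      have h0 : den1 N T X A Q1 Qk g i τ a xi = 0 := by
        rw [den1]
        simp
      rw [h0] at hpos
      exact lt_irrefl _ hpos
    · exact fun j => ⟨(Classical.choice hne) ⟨0, hT⟩ j⟩
  haveI hAne : ∀ j, Nonempty (A j) := by
    rcases isEmpty_or_nonempty (Fin T → ∀ j, A j) with he | hne
    · exfalso
      have h0 : den1 N T X A Q1 Qk g i τ a xi = 0 := by
        rw [den1]
        simp
      rw [h0] at hpos
      exact lt_irrefl _ hpos
    · exact fun j => ⟨(Classical.choice hne) ⟨0, hT⟩ j⟩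
  have hdg := den1_repr N T X A Q1 Qk g hK hg hgc i τ a xi
  have hdh := den1_repr N T X A Q1 Qk ghat hK hh hhc i τ a xihat
  have hng := num1_repr N T X A Q1 Qk g hK hg hgc i τ h1 a xi
  have hnh := num1_repr N T X A Q1 Qk ghat hK hh hhc i τ h1 a xihat
  have hRd := RDen_inv N T X A Q1 Qk g ghat i hagree τ a
  have hRn := RNum_inv N T X A Q1 Qk g ghat i hagree τ a
  rw [cond1, cond1, div_eq_div_iff (ne_of_gt hpos) (ne_of_gt hpos')]
  rw [hng, hnh, hdg, hdh, PiNum_split N T X A Q1 Qk g i τ h1 a xi,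
    PiNum_split N T X A Q1 Qk ghat i τ h1 a xihat, hRn, hRd, ← hx, ← hx']
  ring

end DynGame
end
end
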